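/- arXiv:1712.08418 — 2 statements merged into one kernel-verified Lean document; each statement's English description precedes it below -/
import Mathlib

section
/- Let G ≤ Aut(X*) be an elementary amenable self-replicating group, and let γ and β be words in free groups of finite rank such that the quotient G/β(γ(G)) is a max-n group. Then there exist weakly self-replicating normal subgroups M and N of G such that: (1) N ≤ M, γ(G) ≤ M, and β(γ(G)) ≤ N; (2) rk(M) = rk(γ(G)) and rk(N) = rk(β(γ(G))); and (3) β(M/N) = 1, i.e. every value of the word β at a tuple of elements of M lies in N. -/
universe u v

/-- The automorphism group of the rooted tree `X*`: permutations of the free monoid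
`List X` that preserve the prefix relation. -/
def treeAut (X : Type u) : Subgroup (Equiv.Perm (List X)) where
  carrier := {g | ∀ a b : List X, a <+: b ↔ g a <+: g b}
  one_mem' := by intro a b; simp
  mul_mem' := by
    intro g h hg hh a b
    simpa [Equiv.Perm.mul_apply] using (hh a b).trans (hg (h a) (h b))
  inv_mem' := by
    intro g hg a b
    simpa using (hg (g⁻¹ a) (g⁻¹ b)).symm

/-- The section of `g` at the word `w`: the unique automorphism `s` satisfying
`g (w ++ v) = g w ++ s v` for all `v` (with junk value `1` if no such permutation exists). -/
noncomputable def secAt {X : Type u} (g : Equiv.Perm (List X)) (w : List X) :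
    Equiv.Perm (List X) :=
  haveI := Classical.propDecidable
  if h : ∃ s : Equiv.Perm (List X), ∀ v : List X, g (w ++ v) = g w ++ s v then h.choose
  else 1

/-- The permutation of `X` induced by `g` on the first level of the tree. -/
noncomputable def perm1 {X : Type u} (g : Equiv.Perm (List X)) : Equiv.Perm X :=
  haveI := Classical.propDecidable
  if h : ∃ σ : Equiv.Perm X, ∀ x : X, g [x] = [σ x] then h.choose else 1

/-- A permutation of `X`, viewed as a finitary automorphism of `X*` of depth (at most) one. -/
def embed1 {X : Type u} (σ : Equiv.Perm X) : Equiv.Perm (List X) where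
  toFun w := match w with
    | [] => []
    | x :: vtl => σ x :: vtl
  invFun w := match w with
    | [] => []
    | x :: vtl => σ⁻¹ x :: vtl
  left_inv := by rintro (_ | ⟨x, vtl⟩) <;> simp
  right_inv := by rintro (_ | ⟨x, vtl⟩) <;> simp

/-- `G` is self-similar: all sections of elements of `G` belong to `G`. -/
def SelfSimilarSub {X : Type u} (G : Subgroup (Equiv.Perm (List X))) : Prop :=
  ∀ g ∈ G, ∀ w : List X, secAt g w ∈ G

/-- `sec_G(v)`: the image of the pointwise stabilizer of `v` in `G` under the
section homomorphism at `v`. -/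
def secImage {X : Type u} (G : Subgroup (Equiv.Perm (List X))) (v : List X) :
    Set (Equiv.Perm (List X)) :=
  {h | ∃ g ∈ G, g v = v ∧ secAt g v = h}

/-- `G` is self-replicating: self-similar, transitive on `X`, and `sec_G(x) = G`
for every `x ∈ X`. -/
def SelfReplicating {X : Type u} (G : Subgroup (Equiv.Perm (List X))) : Prop :=
  SelfSimilarSub G ∧ (∀ x y : X, ∃ g ∈ G, g [x] = [y]) ∧
    ∀ x : X, secImage G [x] = (G : Set (Equiv.Perm (List X)))

/-- `G` is weakly self-replicating: `sec_G(v) = G` for every word `v`. -/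
def WeaklySelfReplicating {X : Type u} (G : Subgroup (Equiv.Perm (List X))) : Prop :=
  ∀ v : List X, secImage G v = (G : Set (Equiv.Perm (List X)))

/-- `g` is finitary: all sections at some level are trivial. -/
def IsFinitary {X : Type u} (g : Equiv.Perm (List X)) : Prop :=
  ∃ k : ℕ, ∀ v : List X, v.length = k → secAt g v = 1

/-- `g` is directed. -/
def IsDirectedAut {X : Type u} (g : Equiv.Perm (List X)) : Prop :=
  ∃ k : ℕ, 1 ≤ k ∧ ∃ w : List X, w.length = k ∧ secAt g w = g ∧
    ∀ v : List X, v.length = k → v ≠ w → IsFinitary (secAt g v)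

/-- `g` has bounded activity. -/
def IsBoundedAut {X : Type u} (g : Equiv.Perm (List X)) : Prop :=
  ∃ N : ℕ, ∀ n : ℕ, 1 ≤ n →
    Set.ncard {v : List X | v.length = n ∧ secAt g v ≠ 1} ≤ N

/-- `g` is finite state. -/
def IsFiniteState {X : Type u} (g : Equiv.Perm (List X)) : Prop :=
  (Set.range fun v : List X => secAt g v).Finite

/-- A bounded automata group: a finitely generated self-similar group of tree
automorphisms, all of whose elements are bounded and finite state. -/
def BoundedAutomataGroup {X : Type u} (G : Subgroup (Equiv.Perm (List X))) : Prop :=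
  G ≤ treeAut X ∧ G.FG ∧ SelfSimilarSub G ∧
    ∀ g ∈ G, IsBoundedAut g ∧ IsFiniteState g

/-- An odometer: `⟨d⟩` is transitive on `X` and `d` has exactly one nontrivial
first-level section, which equals `d`. -/
def IsOdometer {X : Type u} (d : Equiv.Perm (List X)) : Prop :=
  (∀ x y : X, ∃ n : ℤ, (d ^ n) [x] = [y]) ∧
  (∀ x : X, secAt d [x] = 1 ∨ secAt d [x] = d) ∧
  ∃! x : X, secAt d [x] = d

/-- A generalized basilica group, with distinguished generating set `Y`. -/
def GenBasilica {X : Type u} (G : Subgroup (Equiv.Perm (List X)))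
    (Y : Set (Equiv.Perm (List X))) : Prop :=
  G ≤ treeAut X ∧ Y.Finite ∧ Subgroup.closure Y = G ∧
    ∀ g ∈ Y, (∀ x : X, secAt g [x] = 1) ∨
      ((∀ x : X, secAt g [x] = 1 ∨ secAt g [x] = g) ∧ ∃! x : X, secAt g [x] = g)

/-- The generating set `Y` is balanced: for each directed `g ∈ Y` with active vertex `x`,
the least `n ≥ 1` such that `g ^ n` fixes `x` also satisfies that `g ^ n` fixes `X`
pointwise. -/
def BalancedSet {X : Type u} (Y : Set (Equiv.Perm (List X))) : Prop :=
  ∀ g ∈ Y, IsDirectedAut g → ∀ x : X, secAt g [x] = g →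
    ∀ n : ℕ, 1 ≤ n → (g ^ n) [x] = [x] →
      (∀ m : ℕ, 1 ≤ m → m < n → (g ^ m) [x] ≠ [x]) →
      ∀ y : X, (g ^ n) [y] = [y]

/-- A bounded automata group in reduced form, with distinguished generating set `Y`. -/
def ReducedForm {X : Type u} (G : Subgroup (Equiv.Perm (List X)))
    (Y : Set (Equiv.Perm (List X))) : Prop :=
  Y.Finite ∧ Subgroup.closure Y = G ∧
    ∀ g ∈ Y, (∀ x : X, secAt g [x] = 1) ∨
      ((∀ x : X, secAt g [x] = g ∨ ∃ h ∈ G, secAt g [x] = embed1 (perm1 h)) ∧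
        ∃! x : X, secAt g [x] = g)

/-- A group of abelian wreath type, with distinguished (self-similar) generating set `Y`. -/
def AbelianWreathType {X : Type u} (G : Subgroup (Equiv.Perm (List X)))
    (Y : Set (Equiv.Perm (List X))) : Prop :=
  G ≤ treeAut X ∧
  (∀ g ∈ G, ∀ h ∈ G, perm1 g * perm1 h = perm1 h * perm1 g) ∧
  Y.Finite ∧ Subgroup.closure Y = G ∧
  (∀ g ∈ Y, ∀ x : X, secAt g [x] ∈ Y) ∧
  ∀ g ∈ Y, (∀ x : X, secAt g [x] = 1) ∨
    ((∀ x : X, secAt g [x] = g ∨ ∃ h ∈ G, secAt g [x] = embed1 (perm1 h)) ∧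
      ∃! x : X, secAt g [x] = g)

/-- The setoid on `X` whose classes are the orbits of `⟨σ⟩`, i.e. the cycles (including
length-one cycles) in the complete cycle decomposition of `σ`. -/
def cycleSetoid {X : Type u} (σ : Equiv.Perm X) : Setoid X where
  r x y := ∃ n : ℤ, (σ ^ n) x = y
  iseqv := by
    constructor
    · exact fun x => ⟨0, by simp⟩
    · rintro x y ⟨n, rfl⟩
      exact ⟨-n, by rw [← Equiv.Perm.mul_apply, ← zpow_add, neg_add_cancel, zpow_zero,
        Equiv.Perm.one_apply]⟩
    · rintro x y z ⟨n, rfl⟩ ⟨m, rfl⟩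
      exact ⟨m + n, by rw [← Equiv.Perm.mul_apply, ← zpow_add]⟩

/-- The vertex set of the cycle graph of a sequence of permutations: elements of `X`
together with the cycles of the permutations. -/
def CycleVertex {X : Type u} {ι : Type v} (σ : ι → Equiv.Perm X) : Type (max u v) :=
  X ⊕ Σ i : ι, Quotient (cycleSetoid (σ i))

/-- The cycle graph of a sequence of permutations of `X`: a bipartite graph on
`X ⊔ {cycles}`, with an edge between `x ∈ X` and a cycle whenever `x` appears in it. -/
def cycleGraph {X : Type u} {ι : Type v} (σ : ι → Equiv.Perm X) :
    SimpleGraph (CycleVertex σ) where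
  Adj a b := ∃ (x : X) (p : Σ i : ι, Quotient (cycleSetoid (σ i))),
      Quotient.mk (cycleSetoid (σ p.1)) x = p.2 ∧
      ((a = Sum.inl x ∧ b = Sum.inr p) ∨ (a = Sum.inr p ∧ b = Sum.inl x))
  symm := by
    constructor
    rintro a b ⟨x, p, hx, h | h⟩ <;> exact ⟨x, p, hx, by tauto⟩
  loopless := by
    constructor
    rintro a ⟨x, p, hx, ⟨h1, h2⟩ | ⟨h1, h2⟩⟩ <;> simp_all

/-- A sequence of permutations of `X` is tree-like if its cycle graph is a tree. -/
def TreeLike {X : Type u} {ι : Type v} (σ : ι → Equiv.Perm X) : Prop :=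
  (cycleGraph σ).IsTree

/-- A kneading automata group, with distinguished generating set `Y`. -/
def Kneading {X : Type u} (G : Subgroup (Equiv.Perm (List X)))
    (Y : Set (Equiv.Perm (List X))) : Prop :=
  G ≤ treeAut X ∧ Y.Finite ∧ Subgroup.closure Y = G ∧
  (∀ g ∈ Y, ∀ x : X, secAt g [x] ∈ Y) ∧
  (∀ h ∈ Y, h ≠ 1 → ∃! p : Equiv.Perm (List X) × X, p.1 ∈ Y ∧ secAt p.1 [p.2] = h) ∧
  (∀ h ∈ Y, ∀ x y : X, (∃ n : ℤ, ((perm1 h) ^ n) x = y) →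
      secAt h [x] ≠ 1 → secAt h [y] ≠ 1 → x = y) ∧
  TreeLike (fun h : {h : Equiv.Perm (List X) // h ∈ Y ∧ h ≠ 1} => perm1 h.1)

/-- A group is virtually abelian if it has an abelian subgroup of finite index. -/
def VirtuallyAbelian (G : Type u) [Group G] : Prop :=
  ∃ H : Subgroup G, H.FiniteIndex ∧ ∀ a b : ↥H, a * b = b * a

/-- A group is locally finite if all of its finitely generated subgroups are finite. -/
def LocallyFiniteGroup (G : Type u) [Group G] : Prop :=
  ∀ H : Subgroup G, H.FG → Finite ↥H

/-- The class of elementary amenable groups: the smallest class of groups containing all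
finite groups and all abelian groups and closed under subgroups (equivalently, injective
homomorphisms), quotients (equivalently, surjective homomorphisms), group extensions and
directed unions. -/
inductive ElementaryAmenable : ∀ (G : Type u) [inst : Group G], Prop where
  | of_finite (G : Type u) [Group G] (h : Finite G) : ElementaryAmenable G
  | of_comm (G : Type u) [Group G] (h : ∀ a b : G, a * b = b * a) : ElementaryAmenable G
  | of_injective (G H : Type u) [Group G] [Group H] (f : G →* H)
      (hf : Function.Injective f) (hH : ElementaryAmenable H) : ElementaryAmenable G
  | of_surjective (G H : Type u) [Group G] [Group H] (f : G →* H)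
      (hf : Function.Surjective f) (hG : ElementaryAmenable G) : ElementaryAmenable H
  | of_extension (G : Type u) [Group G] (N : Subgroup G) [N.Normal]
      (hN : ElementaryAmenable ↥N) (hQ : ElementaryAmenable (G ⧸ N)) :
      ElementaryAmenable G
  | of_directedUnion (G : Type u) [Group G] (ι : Type u) (H : ι → Subgroup G)
      (hdir : Directed (· ≤ ·) H) (hsup : (⨆ i, H i) = ⊤)
      (h : ∀ i, ElementaryAmenable ↥(H i)) : ElementaryAmenable G

/-- The ordinal-indexed hierarchy of elementary amenable groups: `EG₀` consists of the
groups that are finite or abelian (closed under isomorphism); `EG_{α+1}` consists of the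
`EG_α`-by-`EG₀` groups together with the directed unions of `EG_α` groups; and
`EG_λ = ⋃_{β<λ} EG_β` for `λ` a limit. -/
inductive InEG : Ordinal.{u} → ∀ (G : Type u) [inst : Group G], Prop where
  | base (G : Type u) [Group G] (h : Finite G ∨ ∀ a b : G, a * b = b * a) : InEG 0 G
  | iso (α : Ordinal.{u}) (G H : Type u) [Group G] [Group H] (e : G ≃* H)
      (h : InEG α G) : InEG α H
  | succ_ext (α : Ordinal.{u}) (G : Type u) [Group G] (N : Subgroup G) [N.Normal]
      (hN : InEG α ↥N)
      (hQ : Finite (G ⧸ N) ∨ ∀ a b : G ⧸ N, a * b = b * a) : InEG (α + 1) G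
  | succ_lim (α : Ordinal.{u}) (G : Type u) [Group G] (ι : Type u) (H : ι → Subgroup G)
      (hdir : Directed (· ≤ ·) H) (hsup : (⨆ i, H i) = ⊤)
      (h : ∀ i, InEG α ↥(H i)) : InEG (α + 1) G
  | limit (α β : Ordinal.{u}) (G : Type u) [Group G] (hα : Order.IsSuccLimit α) (hβ : β < α)
      (h : InEG β G) : InEG α G

/-- The construction rank of an elementary amenable group: the least ordinal `α` with
`G ∈ EG_α`. -/
noncomputable def egRank (G : Type u) [Group G] : Ordinal.{u} :=
  sInf {α : Ordinal.{u} | InEG α G}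

/-- `M` is a normal subgroup of `H` (both viewed inside a common ambient group). -/
def NormalIn {G : Type u} [Group G] (M H : Subgroup G) : Prop :=
  M ≤ H ∧ ∀ h ∈ H, ∀ m ∈ M, h * m * h⁻¹ ∈ M

/-- The verbal subgroup of the subgroup `H` given by the word `γ`, viewed inside the
ambient group. -/
def verbalIn {G : Type u} [Group G] {n : ℕ} (γ : FreeGroup (Fin n)) (H : Subgroup G) :
    Subgroup G :=
  Subgroup.closure {g | ∃ f : Fin n → G, (∀ i, f i ∈ H) ∧ FreeGroup.lift f γ = g}
theorem Equiv.Perm.apply_inv_self {α : Type*} (f : Equiv.Perm α) (x : α) : f (f⁻¹ x) = x :=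
  f.apply_symm_apply x

theorem Equiv.Perm.inv_apply_self {α : Type*} (f : Equiv.Perm α) (x : α) : f⁻¹ (f x) = x :=
  f.symm_apply_apply x

section TreeBasics

variable {X : Type u}

lemma treeAut_nil {g : Equiv.Perm (List X)} (hg : g ∈ treeAut X) : g [] = ([] : List X) := by
  have h := (hg [] (g⁻¹ [])).mp List.nil_prefix
  rw [Equiv.Perm.apply_inv_self] at h
  exact List.prefix_nil.mp h

lemma nodup_inits : ∀ (l : List X), l.inits.Nodup
  | [] => by simp
  | (x :: l) => by
      rw [List.inits]
      refine List.nodup_cons.mpr ⟨?_, ?_⟩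
      · simp
      · exact (nodup_inits l).map (fun a b h => by simpa using h)

lemma treeAut_length {g : Equiv.Perm (List X)} (hg : g ∈ treeAut X) (a : List X) :
    (g a).length = a.length := by
  classical
  have himg : a.inits.toFinset.image g = (g a).inits.toFinset := by
    ext c
    simp only [Finset.mem_image, List.mem_toFinset, List.mem_inits]
    constructor
    · rintro ⟨b, hb, rfl⟩
      exact (hg b a).mp hb
    · intro hc
      refine ⟨g⁻¹ c, ?_, Equiv.Perm.apply_inv_self g c⟩
      have := (hg (g⁻¹ c) a)
      rw [Equiv.Perm.apply_inv_self] at this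
      exact this.mpr hc
  have h1 : a.inits.toFinset.card = a.length + 1 := by
    rw [List.toFinset_card_of_nodup (nodup_inits a), List.length_inits]
  have h2 : (g a).inits.toFinset.card = (g a).length + 1 := by
    rw [List.toFinset_card_of_nodup (nodup_inits (g a)), List.length_inits]
  have h3 := Finset.card_image_of_injective a.inits.toFinset g.injective
  rw [himg] at h3
  omega

lemma secAt_exists {g : Equiv.Perm (List X)} (hg : g ∈ treeAut X) (w : List X) :
    ∃ s : Equiv.Perm (List X), ∀ v : List X, g (w ++ v) = g w ++ s v := by
  have key : ∀ v, g (w ++ v) = g w ++ (g (w ++ v)).drop (g w).length := by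
    intro v
    obtain ⟨t, ht⟩ := (hg w (w ++ v)).mp (List.prefix_append w v)
    rw [← ht, List.drop_left]
  have hg' : g⁻¹ ∈ treeAut X := inv_mem hg
  have key' : ∀ u, g⁻¹ (g w ++ u) = w ++ (g⁻¹ (g w ++ u)).drop w.length := by
    intro u
    have h0 := (hg' (g w) (g w ++ u)).mp (List.prefix_append _ _)
    rw [Equiv.Perm.inv_apply_self] at h0
    obtain ⟨t, ht⟩ := h0
    rw [← ht, List.drop_left]
  refine ⟨⟨fun v => (g (w ++ v)).drop (g w).length,
          fun u => (g⁻¹ (g w ++ u)).drop w.length, ?_, ?_⟩, key⟩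
  · intro v
    simp only
    rw [← key v, Equiv.Perm.inv_apply_self, List.drop_left]
  · intro u
    simp only
    rw [← key' u, Equiv.Perm.apply_inv_self, List.drop_left]

lemma secAt_spec {g : Equiv.Perm (List X)} (hg : g ∈ treeAut X) (w v : List X) :
    g (w ++ v) = g w ++ secAt g w v := by
  classical
  have hex := secAt_exists hg w
  have h : secAt g w = hex.choose := by
    unfold secAt
    exact dif_pos hex
  rw [h]
  exact hex.choose_spec v

lemma secAt_unique {g : Equiv.Perm (List X)} (hg : g ∈ treeAut X) (w : List X)
    {s : Equiv.Perm (List X)} (hs : ∀ v, g (w ++ v) = g w ++ s v) : secAt g w = s := by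
  refine Equiv.ext fun v => ?_
  exact (List.append_cancel_left ((secAt_spec hg w v).symm.trans (hs v)))

lemma secAt_one (w : List X) : secAt (1 : Equiv.Perm (List X)) w = 1 :=
  secAt_unique (one_mem _) w (fun v => by simp)

lemma secAt_mul {g h : Equiv.Perm (List X)} (hg : g ∈ treeAut X) (hh : h ∈ treeAut X)
    (w : List X) : secAt (g * h) w = secAt g (h w) * secAt h w :=
  secAt_unique (mul_mem hg hh) w (fun v => by
    simp only [Equiv.Perm.mul_apply]
    rw [secAt_spec hh w v, secAt_spec hg (h w) _])

lemma secAt_mem {g : Equiv.Perm (List X)} (hg : g ∈ treeAut X) (w : List X) :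
    secAt g w ∈ treeAut X := by
  intro a b
  have h1 := (List.prefix_append_right_inj (l₁ := a) (l₂ := b) w).symm
  have h2 := hg (w ++ a) (w ++ b)
  rw [secAt_spec hg w a, secAt_spec hg w b] at h2
  exact h1.trans (h2.trans (List.prefix_append_right_inj _))

lemma secAt_inv {g : Equiv.Perm (List X)} (hg : g ∈ treeAut X) (w : List X) :
    secAt g⁻¹ (g w) = (secAt g w)⁻¹ := by
  have h1 := secAt_mul (inv_mem hg) hg w
  rw [inv_mul_cancel, secAt_one] at h1
  exact eq_inv_of_mul_eq_one_left h1.symm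

lemma secAt_nil {g : Equiv.Perm (List X)} (hg : g ∈ treeAut X) :
    secAt g ([] : List X) = g :=
  secAt_unique hg [] (fun v => by rw [List.nil_append, treeAut_nil hg, List.nil_append])

lemma secAt_append {g : Equiv.Perm (List X)} (hg : g ∈ treeAut X) (w v : List X) :
    secAt g (w ++ v) = secAt (secAt g w) v :=
  secAt_unique hg (w ++ v) (fun u => by
    rw [List.append_assoc, secAt_spec hg w (v ++ u), secAt_spec (secAt_mem hg w) v u,
      secAt_spec hg w v, List.append_assoc])

end TreeBasics

section SecSub

variable {X : Type u}

/-- The stabilizer of the word `v` inside the full tree automorphism group. -/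
def treeStab (X : Type u) (v : List X) : Subgroup (Equiv.Perm (List X)) where
  carrier := {g | g ∈ treeAut X ∧ g v = v}
  one_mem' := ⟨one_mem _, by simp⟩
  mul_mem' := by
    rintro g h ⟨hg1, hg2⟩ ⟨hh1, hh2⟩
    exact ⟨mul_mem hg1 hh1, by simp [Equiv.Perm.mul_apply, hh2, hg2]⟩
  inv_mem' := by
    rintro g ⟨hg1, hg2⟩
    refine ⟨inv_mem hg1, ?_⟩
    conv_lhs => rw [← hg2]
    rw [Equiv.Perm.inv_apply_self]

/-- The section-at-`v` homomorphism on the stabilizer of `v`. -/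
noncomputable def secHom {X : Type u} (v : List X) :
    treeStab X v →* Equiv.Perm (List X) where
  toFun g := secAt (g : Equiv.Perm (List X)) v
  map_one' := secAt_one v
  map_mul' g h := by
    have h1 := secAt_mul g.2.1 h.2.1 v
    rw [h.2.2] at h1
    exact h1

/-- The subgroup of sections at `v` of elements of `K` stabilizing `v`. -/
noncomputable def secSub {X : Type u} (K : Subgroup (Equiv.Perm (List X))) (v : List X) :
    Subgroup (Equiv.Perm (List X)) :=
  Subgroup.map (secHom v) (K.subgroupOf (treeStab X v))

lemma mem_secSub {K : Subgroup (Equiv.Perm (List X))} (hK : K ≤ treeAut X) {v : List X}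
    {m : Equiv.Perm (List X)} :
    m ∈ secSub K v ↔ ∃ g, g ∈ K ∧ g v = v ∧ secAt g v = m := by
  constructor
  · rintro ⟨⟨g, hg1, hg2⟩, hgK, rfl⟩
    exact ⟨g, Subgroup.mem_subgroupOf.mp hgK, hg2, rfl⟩
  · rintro ⟨g, hgK, hgv, rfl⟩
    exact ⟨⟨g, hK hgK, hgv⟩, Subgroup.mem_subgroupOf.mpr hgK, rfl⟩

lemma secImage_eq {K : Subgroup (Equiv.Perm (List X))} (hK : K ≤ treeAut X) (v : List X) :
    secImage K v = ↑(secSub K v) := by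
  ext m
  simp only [secImage, Set.mem_setOf_eq, SetLike.mem_coe, mem_secSub hK]

lemma secSub_mono {K K' : Subgroup (Equiv.Perm (List X))} (h : K ≤ K') (v : List X) :
    secSub K v ≤ secSub K' v :=
  Subgroup.map_mono (Subgroup.comap_mono h)

end SecSub

section Verbal

variable {X : Type u}

lemma lift_comp {n : ℕ} {Q Q' : Type*} [Group Q] [Group Q'] (ψ : Q →* Q')
    (f : Fin n → Q) (δ : FreeGroup (Fin n)) :
    ψ (FreeGroup.lift f δ) = FreeGroup.lift (fun i => ψ (f i)) δ := by
  have h : ψ.comp (FreeGroup.lift f) = FreeGroup.lift (fun i => ψ (f i)) :=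
    FreeGroup.ext_hom _ _ (fun i => by simp)
  exact DFunLike.congr_fun h δ

lemma lift_mem {Q : Type*} [Group Q] {K : Subgroup Q} {n : ℕ} {f : Fin n → Q}
    (hf : ∀ i, f i ∈ K) (δ : FreeGroup (Fin n)) : FreeGroup.lift f δ ∈ K := by
  have h2 : FreeGroup.lift f δ
      = K.subtype (FreeGroup.lift (fun i => (⟨f i, hf i⟩ : K)) δ) := by
    rw [lift_comp]; rfl
  rw [h2]
  exact SetLike.coe_mem _

lemma verbalIn_le {Q : Type*} [Group Q] {H : Subgroup Q} {n : ℕ} (δ : FreeGroup (Fin n)) :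
    verbalIn δ H ≤ H := by
  rw [verbalIn, Subgroup.closure_le]
  rintro g ⟨f, hf, rfl⟩
  exact lift_mem hf δ

lemma verbalIn_normalIn {Q : Type*} [Group Q] {G H : Subgroup Q} (hH : NormalIn H G)
    {n : ℕ} (δ : FreeGroup (Fin n)) : NormalIn (verbalIn δ H) G := by
  refine ⟨(verbalIn_le δ).trans hH.1, ?_⟩
  intro h hhG m hm
  induction hm using Subgroup.closure_induction with
  | mem x hx =>
      obtain ⟨f, hf, rfl⟩ := hx
      have hc := lift_comp (MulAut.conj h).toMonoidHom f δ
      simp only [MulEquiv.coe_toMonoidHom, MulAut.conj_apply] at hc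
      rw [hc]
      exact Subgroup.subset_closure
        ⟨fun i => h * f i * h⁻¹, fun i => hH.2 h hhG (f i) (hf i), rfl⟩
  | one => simpa using one_mem (verbalIn δ H)
  | mul x y hx hy ihx ihy =>
      have : h * (x * y) * h⁻¹ = (h * x * h⁻¹) * (h * y * h⁻¹) := by group
      rw [this]; exact mul_mem ihx ihy
  | inv x hx ihx =>
      have : h * x⁻¹ * h⁻¹ = (h * x * h⁻¹)⁻¹ := by group
      rw [this]; exact inv_mem ihx

lemma exists_sec_lift (v : List X) {H Hbig : Subgroup (Equiv.Perm (List X))}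
    (hHbig : Hbig ≤ treeAut X)
    (hcover : ∀ a ∈ H, ∃ g, g ∈ Hbig ∧ g v = v ∧ secAt g v = a)
    {n : ℕ} (δ : FreeGroup (Fin n)) (f : Fin n → Equiv.Perm (List X))
    (hf : ∀ i, f i ∈ H) :
    ∃ k, k ∈ verbalIn δ Hbig ∧ k v = v ∧ secAt k v = FreeGroup.lift f δ := by
  choose g hg1 hg2 hg3 using fun i => hcover (f i) (hf i)
  set F : Fin n → treeStab X v := fun i => ⟨g i, hHbig (hg1 i), hg2 i⟩ with hF
  set k0 : treeStab X v := FreeGroup.lift F δ with hk0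
  refine ⟨↑k0, ?_, k0.2.2, ?_⟩
  · have h1 : ((k0 : treeStab X v) : Equiv.Perm (List X))
        = FreeGroup.lift (fun i => ((F i : treeStab X v) : Equiv.Perm (List X))) δ := by
      rw [hk0]
      exact lift_comp (treeStab X v).subtype F δ
    rw [h1]
    exact Subgroup.subset_closure ⟨fun i => g i, hg1, rfl⟩
  · have h2 : secAt (↑k0) v = FreeGroup.lift (fun i => secAt (g i) v) δ := by
      rw [hk0]
      exact lift_comp (secHom v) F δ
    rw [h2]
    exact congrArg (fun fn => (FreeGroup.lift fn : FreeGroup (Fin n) →* _) δ) (funext hg3)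

lemma verbal_le_secSub (v : List X) {H Hbig : Subgroup (Equiv.Perm (List X))}
    (hHbig : Hbig ≤ treeAut X)
    (hcover : ∀ a ∈ H, ∃ g, g ∈ Hbig ∧ g v = v ∧ secAt g v = a)
    {n : ℕ} (δ : FreeGroup (Fin n)) :
    verbalIn δ H ≤ secSub (verbalIn δ Hbig) v := by
  rw [verbalIn, Subgroup.closure_le]
  rintro m ⟨f, hf, rfl⟩
  obtain ⟨k, hk1, hk2, hk3⟩ := exists_sec_lift v hHbig hcover δ f hf
  exact (mem_secSub ((verbalIn_le δ).trans hHbig)).mpr ⟨k, hk1, hk2, hk3⟩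

end Verbal

section WSR

variable {X : Type u}

lemma secAt_conj {g m : Equiv.Perm (List X)} (hg : g ∈ treeAut X) (hm : m ∈ treeAut X)
    (v : List X) (hmv : m v = v) :
    secAt (g * m * g⁻¹) (g v) = secAt g v * secAt m v * (secAt g v)⁻¹ := by
  have h1 := secAt_mul (mul_mem hg hm) (inv_mem hg) (g v)
  rw [Equiv.Perm.inv_apply_self, secAt_inv hg v] at h1
  rw [secAt_mul hg hm v, hmv] at h1
  exact h1

lemma stab_of_append_stab {g : Equiv.Perm (List X)} (hg : g ∈ treeAut X) {w t : List X}
    (h : g (w ++ t) = w ++ t) : g w = w := by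
  have hpre : g w <+: w ++ t := by
    have := (hg w (w ++ t)).mp (List.prefix_append w t)
    rwa [h] at this
  have hlen := treeAut_length hg w
  rw [List.prefix_iff_eq_take] at hpre
  rw [hpre, hlen, List.take_left]

/-- If the sections of `K` at every first-level vertex recover `K`, then `K` is weakly
self-replicating. -/
lemma wsr_of_level_one [Nonempty X] {K : Subgroup (Equiv.Perm (List X))}
    (hK : K ≤ treeAut X) (h1 : ∀ x : X, secImage K [x] = ↑K) :
    WeaklySelfReplicating K := by
  intro v
  induction v using List.reverseRecOn with
  | nil =>
      ext m
      constructor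
      · rintro ⟨g, hgK, -, rfl⟩
        rw [secAt_nil (hK hgK)]
        exact hgK
      · intro hm
        exact ⟨m, hm, treeAut_nil (hK hm), secAt_nil (hK hm)⟩
  | append_singleton w x ih =>
      apply Set.Subset.antisymm
      · rintro m ⟨g, hgK, hgv, rfl⟩
        have hga := hK hgK
        have hgw : g w = w := stab_of_append_stab hga hgv
        have hsw : secAt g w ∈ K := by
          have : secAt g w ∈ secImage K w := ⟨g, hgK, hgw, rfl⟩
          rwa [ih] at this
        have hx : secAt g w [x] = [x] := by
          have hs := secAt_spec hga w [x]
          rw [hgv, hgw] at hs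
          exact (List.append_cancel_left hs).symm
        rw [secAt_append hga w [x]]
        have : secAt (secAt g w) [x] ∈ secImage K [x] := ⟨secAt g w, hsw, hx, rfl⟩
        rwa [h1 x] at this
      · intro m hm
        have hm' : m ∈ secImage K [x] := by rw [h1 x]; exact hm
        obtain ⟨k, hkK, hkx, hkm⟩ := hm'
        have hk' : k ∈ (K : Set (Equiv.Perm (List X))) := hkK
        rw [← ih] at hk'
        obtain ⟨g, hgK, hgw, hgk⟩ := hk'
        have hga := hK hgK
        refine ⟨g, hgK, ?_, ?_⟩
        · rw [secAt_spec hga w [x], hgw, hgk, hkx]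
        · rw [secAt_append hga w [x], hgk, hkm]

end WSR

section Main

variable {X : Type u} {G : Subgroup (Equiv.Perm (List X))}

lemma sec_of_mem (hle : G ≤ treeAut X) (hsr : SelfReplicating G) (x : X)
    {a : Equiv.Perm (List X)} (ha : a ∈ G) :
    ∃ g, g ∈ G ∧ g [x] = [x] ∧ secAt g [x] = a := by
  have : a ∈ secImage G [x] := by rw [hsr.2.2 x]; exact ha
  exact this

/-- Sections of a normal subgroup of `G` at different first-level vertices agree,
given they recover `M` at one vertex. -/
lemma sec_level_all (hle : G ≤ treeAut X) (hsr : SelfReplicating G)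
    {M : Subgroup (Equiv.Perm (List X))} (hnorm : NormalIn M G) (x₀ : X)
    (h0 : secImage M [x₀] = ↑M) (x : X) : secImage M [x] = ↑M := by
  obtain ⟨g, hgG, hgx⟩ := hsr.2.1 x₀ x
  have hga := hle hgG
  set h := secAt g [x₀] with hh
  have hhG : h ∈ G := hsr.1 g hgG [x₀]
  have hMG := hnorm.1
  apply Set.Subset.antisymm
  · rintro m ⟨mm, hmM, hmx, rfl⟩
    have hma := hle (hMG hmM)
    -- conjugate back by g⁻¹
    have hconj := secAt_conj (inv_mem hga) hma [x] hmx
    rw [inv_inv] at hconj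
    have hginvx : g⁻¹ [x] = [x₀] := by rw [← hgx, Equiv.Perm.inv_apply_self]
    rw [hginvx] at hconj
    have hsecinv : secAt g⁻¹ [x] = h⁻¹ := by rw [← hgx, secAt_inv hga [x₀], hh]
    rw [hsecinv, inv_inv] at hconj
    have hkM : g⁻¹ * mm * g ∈ M := by
      have := hnorm.2 g⁻¹ (inv_mem hgG) mm hmM
      rwa [inv_inv] at this
    have hkx : (g⁻¹ * mm * g) [x₀] = [x₀] := by
      simp only [Equiv.Perm.mul_apply]
      rw [hgx, hmx, hginvx]
    have hmem : h⁻¹ * secAt mm [x] * h ∈ M := by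
      rw [← hconj]
      have : secAt (g⁻¹ * mm * g) [x₀] ∈ secImage M [x₀] := ⟨_, hkM, hkx, rfl⟩
      rwa [h0] at this
    have hfin := hnorm.2 h hhG _ hmem
    have heq : h * (h⁻¹ * secAt mm [x] * h) * h⁻¹ = secAt mm [x] := by group
    rwa [heq] at hfin
  · intro m hm
    have hm1 : h⁻¹ * m * h ∈ M := by
      have := hnorm.2 h⁻¹ (inv_mem hhG) m hm
      rwa [inv_inv] at this
    have hm1' : h⁻¹ * m * h ∈ secImage M [x₀] := by rw [h0]; exact hm1
    obtain ⟨k, hkM, hkx, hks⟩ := hm1'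
    have hka := hle (hMG hkM)
    refine ⟨g * k * g⁻¹, hnorm.2 g hgG k hkM, ?_, ?_⟩
    · simp only [Equiv.Perm.mul_apply]
      rw [← hgx, Equiv.Perm.inv_apply_self, hkx, hgx]
    · have hconj := secAt_conj hga hka [x₀] hkx
      rw [hgx] at hconj
      rw [hconj, hks, ← hh]
      group

/-- One step of the section construction preserves normality in `G`. -/
lemma normalIn_secSub (hle : G ≤ treeAut X) (hsr : SelfReplicating G)
    {K : Subgroup (Equiv.Perm (List X))} (hnorm : NormalIn K G) (x : X) :
    NormalIn (secSub K [x]) G := by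
  have hKa : K ≤ treeAut X := hnorm.1.trans hle
  constructor
  · intro m hm
    rw [mem_secSub hKa] at hm
    obtain ⟨k, hkK, -, rfl⟩ := hm
    exact hsr.1 k (hnorm.1 hkK) [x]
  · intro h hhG m hm
    rw [mem_secSub hKa] at hm
    obtain ⟨k, hkK, hkx, rfl⟩ := hm
    obtain ⟨g, hgG, hgx, hgh⟩ := sec_of_mem hle hsr x hhG
    have hga := hle hgG
    have hka := hKa hkK
    rw [mem_secSub hKa]
    refine ⟨g * k * g⁻¹, hnorm.2 g hgG k hkK, ?_, ?_⟩
    · simp only [Equiv.Perm.mul_apply]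
      rw [← hgx, Equiv.Perm.inv_apply_self, hkx, hgx]
    · have hconj := secAt_conj hga hka [x] hkx
      rw [hgx] at hconj
      rw [hconj, hgh]

end Main

section EGClosure

theorem InEG.of_surjective {α : Ordinal.{u}} {G : Type u} [Group G] (h : InEG α G) :
    ∀ {H : Type u} [Group H] (f : G →* H), Function.Surjective f → InEG α H := by
  induction h with
  | base G hfin =>
      intro H _ f hf
      refine InEG.base H ?_
      rcases hfin with hfin | hcomm
      · exact Or.inl (Finite.of_surjective f hf)
      · refine Or.inr fun a b => ?_
        obtain ⟨x, rfl⟩ := hf a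
        obtain ⟨y, rfl⟩ := hf b
        rw [← map_mul, ← map_mul, hcomm]
  | iso α A B e h ih =>
      intro H _ f hf
      exact ih (f.comp e.toMonoidHom) (hf.comp e.surjective)
  | succ_ext α A N hN hQ ihN =>
      intro H _ f hf
      haveI hNormal : (N.map f).Normal := Subgroup.Normal.map inferInstance f hf
      have h1 : InEG α ↥(N.map f) := ihN (f.subgroupMap N) (f.subgroupMap_surjective N)
      have hcm : N ≤ (N.map f).comap f := fun x hx => Subgroup.mem_comap.mpr ⟨x, hx, rfl⟩
      have hsurj2 : Function.Surjective (QuotientGroup.map N (N.map f) f hcm) := by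
        intro y
        induction y using QuotientGroup.induction_on with
        | H h =>
          obtain ⟨g, rfl⟩ := hf h
          exact ⟨QuotientGroup.mk g, rfl⟩
      have hQ' : Finite (H ⧸ N.map f) ∨ ∀ a b : H ⧸ N.map f, a * b = b * a := by
        rcases hQ with hfin | hcomm
        · exact Or.inl (Finite.of_surjective _ hsurj2)
        · refine Or.inr fun a b => ?_
          obtain ⟨x, rfl⟩ := hsurj2 a
          obtain ⟨y, rfl⟩ := hsurj2 b
          rw [← map_mul, ← map_mul, hcomm]
      exact InEG.succ_ext α H (N.map f) h1 hQ'
  | succ_lim α A ι K hdir hsup hmem ih =>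
      intro H _ f hf
      refine InEG.succ_lim α H ι (fun i => (K i).map f) ?_ ?_
        (fun i => ih i (f.subgroupMap _) (f.subgroupMap_surjective _))
      · intro i j
        obtain ⟨k, hik, hjk⟩ := hdir i j
        exact ⟨k, Subgroup.map_mono hik, Subgroup.map_mono hjk⟩
      · rw [← Subgroup.map_iSup, hsup, Subgroup.map_top_of_surjective f hf]
  | limit α β A hα hβ h ih =>
      intro H _ f hf
      exact InEG.limit α β H hα hβ (ih f hf)

theorem InEG.of_injective {α : Ordinal.{u}} {A : Type u} [Group A] (h : InEG α A) :
    ∀ {G : Type u} [Group G] (f : G →* A), Function.Injective f → InEG α G := by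
  induction h with
  | base A hfin =>
      intro G _ f hf
      refine InEG.base G ?_
      rcases hfin with hfin | hcomm
      · exact Or.inl (Finite.of_injective f hf)
      · exact Or.inr fun a b => hf (by rw [map_mul, map_mul, hcomm])
  | iso α A B e h ih =>
      intro G _ f hf
      exact ih (e.symm.toMonoidHom.comp f) (e.symm.injective.comp hf)
  | succ_ext α A N hN hQ ihN =>
      intro G _ f hf
      haveI : (N.comap f).Normal := Subgroup.Normal.comap inferInstance f
      have h1 : InEG α ↥(N.comap f) := by
        refine ihN (f.subgroupComap N) ?_
        intro x y hxy
        exact Subtype.ext (hf (congrArg Subtype.val hxy))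
      set ψ : G →* A ⧸ N := (QuotientGroup.mk' N).comp f with hψ
      have hker : ψ.ker = N.comap f := by
        rw [hψ, ← MonoidHom.comap_ker, QuotientGroup.ker_mk']
      have e2 : G ⧸ N.comap f ≃* G ⧸ ψ.ker := QuotientGroup.quotientMulEquivOfEq hker.symm
      have hinj2 : Function.Injective
          ((QuotientGroup.kerLift ψ).comp e2.toMonoidHom) :=
        (QuotientGroup.kerLift_injective ψ).comp e2.injective
      have hQ' : Finite (G ⧸ N.comap f) ∨ ∀ a b : G ⧸ N.comap f, a * b = b * a := by
        rcases hQ with hfin | hcomm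
        · exact Or.inl (Finite.of_injective _ hinj2)
        · exact Or.inr fun a b => hinj2 (by rw [map_mul, map_mul, hcomm])
      exact InEG.succ_ext α G (N.comap f) h1 hQ'
  | succ_lim α A ι K hdir hsup hmem ih =>
      intro G _ f hf
      by_cases hι : Nonempty ι
      · haveI := hι
        have hdir' : Directed (· ≤ ·) (fun i => (K i).comap f) := by
          intro i j
          obtain ⟨k, hik, hjk⟩ := hdir i j
          exact ⟨k, Subgroup.comap_mono hik, Subgroup.comap_mono hjk⟩
        refine InEG.succ_lim α G ι (fun i => (K i).comap f) hdir' ?_ ?_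
        · ext x
          simp only [Subgroup.mem_top, iff_true]
          rw [Subgroup.mem_iSup_of_directed hdir']
          have hx : f x ∈ (⊤ : Subgroup A) := trivial
          rw [← hsup, Subgroup.mem_iSup_of_directed hdir] at hx
          obtain ⟨i, hi⟩ := hx
          exact ⟨i, Subgroup.mem_comap.mpr hi⟩
        · intro i
          refine ih i (f.subgroupComap (K i)) ?_
          intro x y hxy
          exact Subtype.ext (hf (congrArg Subtype.val hxy))
      · haveI := not_nonempty_iff.mp hι
        have htriv : ∀ a : A, a = 1 := by
          intro a
          have : a ∈ (⊤ : Subgroup A) := trivial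
          rw [← hsup, iSup_of_empty] at this
          exact Subgroup.mem_bot.mp this
        refine InEG.succ_lim α G ι (fun i => (K i).comap f) (fun i => isEmptyElim i)
          ?_ (fun i => isEmptyElim i)
        rw [iSup_of_empty]
        ext x
        simp only [Subgroup.mem_bot, Subgroup.mem_top, iff_true]
        exact hf (by rw [htriv (f x), map_one])
  | limit α β A hα hβ h ih =>
      intro G _ f hf
      exact InEG.limit α β G hα hβ (ih f hf)

end EGClosure

lemma InEG.of_le {Q : Type u} [Group Q] {K L : Subgroup Q} (hKL : K ≤ L)
    {α : Ordinal.{u}} (h : InEG α ↥L) : InEG α ↥K :=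
  h.of_injective (Subgroup.inclusion hKL) (Subgroup.inclusion_injective hKL)

lemma InEG.secSub_step {X : Type u} {K : Subgroup (Equiv.Perm (List X))} (v : List X)
    {α : Ordinal.{u}} (h : InEG α ↥K) : InEG α ↥(secSub K v) := by
  have h1 : InEG α ↥(K.subgroupOf (treeStab X v)) :=
    h.of_injective ((treeStab X v).subtype.subgroupComap K)
      (by
        intro x y hxy
        have h' := congrArg Subtype.val hxy
        exact Subtype.ext (Subtype.ext h'))
  exact h1.of_surjective ((secHom v).subgroupMap _) ((secHom v).subgroupMap_surjective _)


/-- **Verbal subgroups of elementary amenable self-replicating groups**: if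
`G ≤ Aut(X*)` is elementary amenable and self-replicating and `γ, β` are words such that
`G/β(γ(G))` is a max-n group (all increasing chains of normal subgroups of `G` containing
`β(γ(G))` stabilize), then there are weakly self-replicating normal subgroups `M, N` of
`G` with `N ≤ M`, `γ(G) ≤ M`, `β(γ(G)) ≤ N`, `rk(M) = rk(γ(G))`,
`rk(N) = rk(β(γ(G)))` and `β(M/N) = 1`. -/
theorem verbal_weaklySelfReplicating
    {X : Type u} [Finite X] [Nontrivial X]
    (G : Subgroup (Equiv.Perm (List X))) (hle : G ≤ treeAut X)
    (hEA : ElementaryAmenable ↥G) (hsr : SelfReplicating G)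
    {nγ nβ : ℕ} (γ : FreeGroup (Fin nγ)) (β : FreeGroup (Fin nβ))
    (hmax : ∀ C : ℕ →o Subgroup (Equiv.Perm (List X)),
      (∀ n, NormalIn (C n) G) → (∀ n, verbalIn β (verbalIn γ G) ≤ C n) →
      ∃ n, ∀ m, n ≤ m → C m = C n) :
    ∃ M N : Subgroup (Equiv.Perm (List X)),
      WeaklySelfReplicating M ∧ WeaklySelfReplicating N ∧
      NormalIn M G ∧ NormalIn N G ∧
      N ≤ M ∧ verbalIn γ G ≤ M ∧ verbalIn β (verbalIn γ G) ≤ N ∧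
      egRank ↥M = egRank ↥(verbalIn γ G) ∧
      egRank ↥N = egRank ↥(verbalIn β (verbalIn γ G)) ∧
      ∀ f : Fin nβ → Equiv.Perm (List X), (∀ i, f i ∈ M) → FreeGroup.lift f β ∈ N := by
  classical
  obtain ⟨x₀⟩ : Nonempty X := inferInstance
  set K0 : Subgroup (Equiv.Perm (List X)) := verbalIn γ G with hK0def
  set L0 : Subgroup (Equiv.Perm (List X)) := verbalIn β K0 with hL0def
  have hGnorm : NormalIn G G :=
    ⟨le_refl G, fun h hh m hm => mul_mem (mul_mem hh hm) (inv_mem hh)⟩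
  have hK0norm : NormalIn K0 G := verbalIn_normalIn hGnorm γ
  have hK0le : K0 ≤ G := verbalIn_le γ
  have hK0a : K0 ≤ treeAut X := hK0le.trans hle
  have hL0norm : NormalIn L0 G := verbalIn_normalIn hK0norm β
  have hL0le : L0 ≤ K0 := verbalIn_le β
  -- the two ascending chains
  set Kc : ℕ → Subgroup (Equiv.Perm (List X)) :=
    fun n => Nat.rec K0 (fun _ Kn => secSub Kn [x₀]) n with hKc
  set Lc : ℕ → Subgroup (Equiv.Perm (List X)) :=
    fun n => Nat.rec L0 (fun _ Ln => secSub Ln [x₀]) n with hLc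
  have hKc0 : Kc 0 = K0 := rfl
  have hKcs : ∀ n, Kc (n + 1) = secSub (Kc n) [x₀] := fun n => rfl
  have hLc0 : Lc 0 = L0 := rfl
  have hLcs : ∀ n, Lc (n + 1) = secSub (Lc n) [x₀] := fun n => rfl
  have hKnorm : ∀ n, NormalIn (Kc n) G := by
    intro n; induction n with
    | zero => exact hK0norm
    | succ n ih => exact normalIn_secSub hle hsr ih x₀
  have hLnorm : ∀ n, NormalIn (Lc n) G := by
    intro n; induction n with
    | zero => exact hL0norm
    | succ n ih => exact normalIn_secSub hle hsr ih x₀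
  have hKa : ∀ n, Kc n ≤ treeAut X := fun n => (hKnorm n).1.trans hle
  have hLa : ∀ n, Lc n ≤ treeAut X := fun n => (hLnorm n).1.trans hle
  have hKgrow0 : K0 ≤ secSub K0 [x₀] :=
    verbal_le_secSub [x₀] hle (fun a ha => sec_of_mem hle hsr x₀ ha) γ
  have hLgrow0 : L0 ≤ secSub L0 [x₀] :=
    verbal_le_secSub [x₀] hK0a
      (fun a ha => (mem_secSub hK0a).mp (hKgrow0 ha)) β
  have hKgrow : ∀ n, Kc n ≤ Kc (n + 1) := by
    intro n; induction n with
    | zero => exact hKgrow0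
    | succ n ih => exact secSub_mono ih [x₀]
  have hLgrow : ∀ n, Lc n ≤ Lc (n + 1) := by
    intro n; induction n with
    | zero => exact hLgrow0
    | succ n ih => exact secSub_mono ih [x₀]
  have hKmono : Monotone Kc := monotone_nat_of_le_succ hKgrow
  have hLmono : Monotone Lc := monotone_nat_of_le_succ hLgrow
  have hLK : ∀ n, Lc n ≤ Kc n := by
    intro n; induction n with
    | zero => exact hL0le
    | succ n ih => exact secSub_mono ih [x₀]
  have hVβ : ∀ n, verbalIn β (Kc n) ≤ Lc n := by
    intro n; induction n with
    | zero => exact le_refl _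
    | succ n ih =>
        have h1 : verbalIn β (secSub (Kc n) [x₀]) ≤ secSub (verbalIn β (Kc n)) [x₀] :=
          verbal_le_secSub [x₀] (hKa n)
            (fun a ha => (mem_secSub (hKa n)).mp ha) β
        exact h1.trans (secSub_mono ih [x₀])
  -- rank transfer along the chain
  have hKrank : ∀ n, ∀ α : Ordinal.{u}, InEG α ↥K0 → InEG α ↥(Kc n) := by
    intro n; induction n with
    | zero => exact fun α h => h
    | succ n ih => exact fun α h => (ih α h).secSub_step [x₀]
  have hLrank : ∀ n, ∀ α : Ordinal.{u}, InEG α ↥L0 → InEG α ↥(Lc n) := by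
    intro n; induction n with
    | zero => exact fun α h => h
    | succ n ih => exact fun α h => (ih α h).secSub_step [x₀]
  -- stabilization
  obtain ⟨n₁, hn₁⟩ := hmax ⟨Kc, hKmono⟩ (fun n => hKnorm n)
    (fun n => hL0le.trans ((hKc0 ▸ hKmono (Nat.zero_le n)) : K0 ≤ Kc n))
  obtain ⟨n₂, hn₂⟩ := hmax ⟨Lc, hLmono⟩ (fun n => hLnorm n)
    (fun n => (hLc0 ▸ hLmono (Nat.zero_le n) : L0 ≤ Lc n))
  set nn := max n₁ n₂ with hnn
  refine ⟨Kc nn, Lc nn, ?_, ?_, hKnorm nn, hLnorm nn, hLK nn,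
    hKc0 ▸ hKmono (Nat.zero_le nn), hLc0 ▸ hLmono (Nat.zero_le nn), ?_, ?_, ?_⟩
  · -- WSR for M
    have hMfix : secSub (Kc nn) [x₀] = Kc nn := by
      have h1 : Kc (nn + 1) = Kc n₁ := hn₁ (nn + 1) ((le_max_left n₁ n₂).trans (Nat.le_succ nn))
      have h2 : Kc nn = Kc n₁ := hn₁ nn (le_max_left n₁ n₂)
      rw [← hKcs nn] ; rw [h1, h2]
    have hMimage : secImage (Kc nn) [x₀] = ↑(Kc nn) := by
      rw [secImage_eq (hKa nn) [x₀], hMfix]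
    exact wsr_of_level_one (hKa nn)
      (sec_level_all hle hsr (hKnorm nn) x₀ hMimage)
  · -- WSR for N
    have hNfix : secSub (Lc nn) [x₀] = Lc nn := by
      have h1 : Lc (nn + 1) = Lc n₂ := hn₂ (nn + 1) ((le_max_right n₁ n₂).trans (Nat.le_succ nn))
      have h2 : Lc nn = Lc n₂ := hn₂ nn (le_max_right n₁ n₂)
      rw [← hLcs nn]; rw [h1, h2]
    have hNimage : secImage (Lc nn) [x₀] = ↑(Lc nn) := by
      rw [secImage_eq (hLa nn) [x₀], hNfix]
    exact wsr_of_level_one (hLa nn)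
      (sec_level_all hle hsr (hLnorm nn) x₀ hNimage)
  · -- rank of M
    have hset : {α : Ordinal.{u} | InEG α ↥(Kc nn)} = {α : Ordinal.{u} | InEG α ↥K0} := by
      ext α
      exact ⟨fun h => h.of_le (hKc0 ▸ hKmono (Nat.zero_le nn)), fun h => hKrank nn α h⟩
    rw [egRank, egRank, hset]
  · -- rank of N
    have hset : {α : Ordinal.{u} | InEG α ↥(Lc nn)} = {α : Ordinal.{u} | InEG α ↥L0} := by
      ext α
      exact ⟨fun h => h.of_le (hLc0 ▸ hLmono (Nat.zero_le nn)), fun h => hLrank nn α h⟩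
    rw [egRank, egRank, hset]
  · -- β(M) ≤ N
    intro f hf
    exact hVβ nn (Subgroup.subset_closure ⟨f, hf, rfl⟩)
end

section
/- For every nontrivial abelian group A, the wreath product A ≀ ℤ has no faithful representation as a self-replicating bounded automata group: there is no finite set X with at least two elements and no injective homomorphism φ : A ≀ ℤ → Aut(X*) such that φ(A ≀ ℤ) is a self-replicating bounded automata group. -/
universe u v

/-- The subgroup of `ℤ → A` consisting of the finitely supported functions; this is the
restricted direct sum `⊕_{n ∈ ℤ} A` written multiplicatively. -/
def finSuppSubgroup (A : Type u) [CommGroup A] : Subgroup (ℤ → A) where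
  carrier := {f | {n : ℤ | f n ≠ 1}.Finite}
  one_mem' := by simp
  mul_mem' := by
    intro f g hf hg
    apply Set.Finite.subset (hf.union hg)
    intro n hn
    simp only [Set.mem_setOf_eq, Pi.mul_apply, Set.mem_union] at hn ⊢
    by_contra hc
    push_neg at hc
    exact hn (by rw [hc.1, hc.2, one_mul])
  inv_mem' := by
    intro f hf
    simpa using hf

/-- The shift by `k` on `⊕_{n ∈ ℤ} A`, as a group automorphism. -/
def shiftBy (A : Type u) [CommGroup A] (k : ℤ) :
    ↥(finSuppSubgroup A) ≃* ↥(finSuppSubgroup A) where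
  toFun f := ⟨fun n => (f : ℤ → A) (n - k),
    Set.Finite.preimage (Function.Injective.injOn (fun a b h => by omega)) f.2⟩
  invFun f := ⟨fun n => (f : ℤ → A) (n + k),
    Set.Finite.preimage (Function.Injective.injOn (fun a b h => by omega)) f.2⟩
  left_inv f := Subtype.ext (funext fun n => congrArg (f : ℤ → A) (by omega))
  right_inv f := Subtype.ext (funext fun n => congrArg (f : ℤ → A) (by omega))
  map_mul' f g := rfl

/-- The shift action of `ℤ` on `⊕_{n ∈ ℤ} A`. -/
def shiftHom (A : Type u) [CommGroup A] :
    Multiplicative ℤ →* MulAut ↥(finSuppSubgroup A) :=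
  MonoidHom.mk' (fun k => shiftBy A k.toAdd) (by
    intro k l
    refine MulEquiv.ext fun f => Subtype.ext (funext fun n => ?_)
    show (f : ℤ → A) (n - (Multiplicative.toAdd k + Multiplicative.toAdd l)) =
      (f : ℤ → A) (n - Multiplicative.toAdd k - Multiplicative.toAdd l)
    exact congrArg (f : ℤ → A) (by omega))

/-- The restricted wreath product `A ≀ ℤ = (⊕_{n ∈ ℤ} A) ⋊ ℤ`, where `ℤ` acts by shifting
coordinates. -/
def wreathZ (A : Type u) [CommGroup A] : Type u :=
  SemidirectProduct ↥(finSuppSubgroup A) (Multiplicative ℤ) (shiftHom A)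

instance (A : Type u) [CommGroup A] : Group (wreathZ A) :=
  inferInstanceAs (Group (SemidirectProduct ↥(finSuppSubgroup A) (Multiplicative ℤ)
    (shiftHom A)))


/-! ### Auxiliary development for the main theorem -/

namespace AuxWreath

open List

variable {X : Type u}

lemma perm_inv_apply_self {α : Type*} (g : Equiv.Perm α) (x : α) : g⁻¹ (g x) = x :=
  g.symm_apply_apply x

lemma perm_apply_inv_self {α : Type*} (g : Equiv.Perm α) (x : α) : g (g⁻¹ x) = x :=
  g.apply_symm_apply x

lemma treeAut_iff {g : Equiv.Perm (List X)} :
    g ∈ treeAut X ↔ ∀ a b : List X, a <+: b ↔ g a <+: g b := Iff.rfl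

lemma apply_nil {g : Equiv.Perm (List X)} (hg : g ∈ treeAut X) : g [] = [] := by
  have h1 : ([] : List X) <+: g⁻¹ [] := List.nil_prefix
  have h2 := (treeAut_iff.mp hg [] (g⁻¹ [])).mp h1
  rw [perm_apply_inv_self] at h2
  exact List.prefix_nil.mp h2

lemma length_le_apply {g : Equiv.Perm (List X)} (hg : g ∈ treeAut X) (w : List X) :
    w.length ≤ (g w).length := by
  induction w using List.reverseRecOn with
  | nil => simp [apply_nil hg]
  | append_singleton w x ih =>
      have hpre : g w <+: g (w ++ [x]) := (treeAut_iff.mp hg w (w ++ [x])).mp ⟨[x], rfl⟩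
      have hne : g w ≠ g (w ++ [x]) := by
        intro h
        have := g.injective h
        simp at this
      have hlt : (g w).length < (g (w ++ [x])).length :=
        lt_of_le_of_ne hpre.length_le (fun hl => hne (hpre.eq_of_length hl))
      have : w.length + 1 ≤ (g (w ++ [x])).length := Nat.succ_le_of_lt (lt_of_le_of_lt ih hlt)
      simpa using this

lemma length_apply {g : Equiv.Perm (List X)} (hg : g ∈ treeAut X) (w : List X) :
    (g w).length = w.length := by
  have h1 := length_le_apply hg w
  have h2 := length_le_apply ((treeAut X).inv_mem hg) (g w)
  rw [perm_inv_apply_self] at h2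
  omega

lemma apply_append {g : Equiv.Perm (List X)} (hg : g ∈ treeAut X) (u w : List X) :
    g (u ++ w) = g u ++ (g (u ++ w)).drop u.length := by
  have hp : g u <+: g (u ++ w) := (treeAut_iff.mp hg u (u ++ w)).mp ⟨w, rfl⟩
  obtain ⟨r, hr⟩ := hp
  have hd : (g u ++ r).drop u.length = r := by
    rw [← length_apply hg u, List.drop_left]
  rw [← hr, hd]

lemma exists_sec {g : Equiv.Perm (List X)} (hg : g ∈ treeAut X) (v : List X) :
    ∃ s : Equiv.Perm (List X), ∀ w : List X, g (v ++ w) = g v ++ s w := by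
  have hginv : g⁻¹ ∈ treeAut X := (treeAut X).inv_mem hg
  have hkey : ∀ r : List X, g⁻¹ (g v ++ r) = v ++ (g⁻¹ (g v ++ r)).drop v.length := by
    intro r
    have h1 := apply_append hginv (g v) r
    rw [perm_inv_apply_self] at h1
    rw [← length_apply hg v]
    nth_rewrite 1 [h1]
    rfl
  refine ⟨{ toFun := fun w => (g (v ++ w)).drop v.length,
            invFun := fun r => (g⁻¹ (g v ++ r)).drop v.length,
            left_inv := ?_, right_inv := ?_ }, ?_⟩
  · intro w
    show (g⁻¹ (g v ++ (g (v ++ w)).drop v.length)).drop v.length = w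
    have h1 := apply_append hg v w
    rw [← h1, perm_inv_apply_self]
    exact List.drop_left
  · intro r
    show (g (v ++ (g⁻¹ (g v ++ r)).drop v.length)).drop v.length = r
    have h2 := hkey r
    have h3 : g (v ++ (g⁻¹ (g v ++ r)).drop v.length) = g v ++ r := by
      rw [← h2, perm_apply_inv_self]
    rw [h3, ← length_apply hg v]
    exact List.drop_left
  · intro w
    exact apply_append hg v w

lemma secAt_spec {g : Equiv.Perm (List X)} (hg : g ∈ treeAut X) (v w : List X) :
    g (v ++ w) = g v ++ secAt g v w := by
  rw [secAt, dif_pos (exists_sec hg v)]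
  exact (exists_sec hg v).choose_spec w

lemma secAt_eq {g : Equiv.Perm (List X)} (hg : g ∈ treeAut X) {v : List X}
    (s : Equiv.Perm (List X)) (hs : ∀ w, g (v ++ w) = g v ++ s w) : secAt g v = s := by
  refine Equiv.ext fun w => ?_
  have h1 := secAt_spec hg v w
  have h2 := hs w
  rw [h1] at h2
  exact List.append_cancel_left h2

lemma secAt_mem_treeAut {g : Equiv.Perm (List X)} (hg : g ∈ treeAut X) (v : List X) :
    secAt g v ∈ treeAut X := by
  intro a b
  have e1 := secAt_spec hg v a
  have e2 := secAt_spec hg v b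
  constructor
  · intro h
    have h1 : v ++ a <+: v ++ b := (List.prefix_append_right_inj v).mpr h
    have h2 := (treeAut_iff.mp hg _ _).mp h1
    rw [e1, e2] at h2
    exact (List.prefix_append_right_inj (g v)).mp h2
  · intro h
    have h1 : g (v ++ a) <+: g (v ++ b) := by
      rw [e1, e2]
      exact (List.prefix_append_right_inj (g v)).mpr h
    have h2 := (treeAut_iff.mp hg _ _).mpr h1
    exact (List.prefix_append_right_inj v).mp h2

lemma secAt_one (v : List X) : secAt (1 : Equiv.Perm (List X)) v = 1 :=
  secAt_eq (one_mem _) 1 (by intro w; simp)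

lemma secAt_mul {g h : Equiv.Perm (List X)} (hg : g ∈ treeAut X) (hh : h ∈ treeAut X)
    (v : List X) : secAt (g * h) v = secAt g (h v) * secAt h v :=
  secAt_eq (mul_mem hg hh) _ (by
    intro w
    have e1 := secAt_spec hh v w
    have e2 := secAt_spec hg (h v) (secAt h v w)
    simp only [Equiv.Perm.mul_apply]
    rw [e1, e2])

lemma secAt_nil {g : Equiv.Perm (List X)} (hg : g ∈ treeAut X) : secAt g [] = g :=
  secAt_eq hg g (by intro w; simp [apply_nil hg])

lemma secAt_append {g : Equiv.Perm (List X)} (hg : g ∈ treeAut X) (u v : List X) :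
    secAt g (u ++ v) = secAt (secAt g u) v :=
  secAt_eq hg _ (by
    intro w
    have hsu := secAt_mem_treeAut hg u
    have e1 := secAt_spec hg u (v ++ w)
    have e2 := secAt_spec hsu v w
    have e3 := secAt_spec hg u v
    rw [List.append_assoc, e1, e2, e3, List.append_assoc])

lemma secAt_inv {g : Equiv.Perm (List X)} (hg : g ∈ treeAut X) (v : List X) :
    secAt g⁻¹ (g v) = (secAt g v)⁻¹ := by
  have h1 := secAt_mul ((treeAut X).inv_mem hg) hg v
  rw [inv_mul_cancel, secAt_one] at h1
  exact eq_inv_of_mul_eq_one_left h1.symm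

lemma exists_singleton {g : Equiv.Perm (List X)} (hg : g ∈ treeAut X) (x : X) :
    ∃ y, g [x] = [y] := by
  have := length_apply hg [x]
  exact List.length_eq_one_iff.mp this


section Core

variable {G : Subgroup (Equiv.Perm (List X))}

lemma tau_one {tau : Equiv.Perm (List X) → ℤ}
    (htau : ∀ g h, g ∈ G → h ∈ G → tau (g * h) = tau g + tau h) : tau 1 = 0 := by
  have := htau 1 1 (one_mem G) (one_mem G)
  simp only [mul_one] at this
  omega

lemma tau_inv {tau : Equiv.Perm (List X) → ℤ}
    (htau : ∀ g h, g ∈ G → h ∈ G → tau (g * h) = tau g + tau h)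
    {g : Equiv.Perm (List X)} (hg : g ∈ G) : tau g⁻¹ = -tau g := by
  have h1 := htau g g⁻¹ hg (inv_mem hg)
  rw [mul_inv_cancel, tau_one htau] at h1
  omega

lemma tau_pow {tau : Equiv.Perm (List X) → ℤ}
    (htau : ∀ g h, g ∈ G → h ∈ G → tau (g * h) = tau g + tau h)
    {g : Equiv.Perm (List X)} (hg : g ∈ G) (n : ℕ) : tau (g ^ n) = n * tau g := by
  induction n with
  | zero => simpa using tau_one htau
  | succ n ih =>
      rw [pow_succ, htau _ _ (pow_mem hg n) hg, ih]
      push_cast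
      ring

lemma tau_zpow {tau : Equiv.Perm (List X) → ℤ}
    (htau : ∀ g h, g ∈ G → h ∈ G → tau (g * h) = tau g + tau h)
    {g : Equiv.Perm (List X)} (hg : g ∈ G) (z : ℤ) : tau (g ^ z) = z * tau g := by
  cases z with
  | ofNat n => rw [Int.ofNat_eq_coe, zpow_natCast, tau_pow htau hg]
  | negSucc n =>
      rw [zpow_negSucc, tau_inv htau (pow_mem hg (n+1)), tau_pow htau hg, Int.negSucc_eq]
      push_cast
      ring

lemma fix_inv {g : Equiv.Perm (List X)} {v : List X} (hfix : g v = v) : g⁻¹ v = v := by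
  conv_lhs => rw [← hfix]
  exact perm_inv_apply_self g v

lemma fix_pow {g : Equiv.Perm (List X)} {v : List X} (hfix : g v = v) (n : ℕ) :
    (g ^ n) v = v := by
  induction n with
  | zero => simp
  | succ n ih => rw [pow_succ, Equiv.Perm.mul_apply, hfix, ih]

lemma fix_zpow {g : Equiv.Perm (List X)} {v : List X} (hfix : g v = v) (z : ℤ) :
    (g ^ z) v = v := by
  cases z with
  | ofNat n => rw [Int.ofNat_eq_coe, zpow_natCast]; exact fix_pow hfix n
  | negSucc n => rw [zpow_negSucc]; exact fix_inv (fix_pow hfix (n+1))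

lemma sec_pow {g : Equiv.Perm (List X)} (hg : g ∈ treeAut X) {v : List X}
    (hfix : g v = v) (n : ℕ) : secAt (g ^ n) v = (secAt g v) ^ n := by
  induction n with
  | zero => simpa using secAt_one v
  | succ n ih =>
      rw [pow_succ, secAt_mul ((treeAut X).pow_mem hg n) hg v, hfix, ih, pow_succ]

lemma sec_inv {g : Equiv.Perm (List X)} (hg : g ∈ treeAut X) {v : List X}
    (hfix : g v = v) : secAt g⁻¹ v = (secAt g v)⁻¹ := by
  have := secAt_inv hg v
  rwa [hfix] at this

lemma sec_zpow {g : Equiv.Perm (List X)} (hg : g ∈ treeAut X) {v : List X}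
    (hfix : g v = v) (z : ℤ) : secAt (g ^ z) v = (secAt g v) ^ z := by
  cases z with
  | ofNat n => rw [Int.ofNat_eq_coe, zpow_natCast, zpow_natCast]; exact sec_pow hg hfix n
  | negSucc n =>
      rw [zpow_negSucc, zpow_negSucc, sec_inv ((treeAut X).pow_mem hg (n+1))
        (fix_pow hfix (n+1)), sec_pow hg hfix (n+1)]

lemma wsr (hGt : G ≤ treeAut X)
    (hsec : ∀ x : X, secImage G [x] = (G : Set (Equiv.Perm (List X)))) :
    ∀ (v : List X) (g : Equiv.Perm (List X)), g ∈ G →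
      ∃ h, h ∈ G ∧ h v = v ∧ secAt h v = g := by
  intro v
  induction v with
  | nil =>
      intro g hgG
      exact ⟨g, hgG, apply_nil (hGt hgG), secAt_nil (hGt hgG)⟩
  | cons x v' ih =>
      intro g hgG
      obtain ⟨h₁, h₁G, h₁fix, h₁sec⟩ := ih g hgG
      have hmem : h₁ ∈ secImage G [x] := by
        rw [hsec x]; exact h₁G
      obtain ⟨h, hG, hfix, hsecx⟩ := hmem
      have hht : h ∈ treeAut X := hGt hG
      refine ⟨h, hG, ?_, ?_⟩
      · show h ([x] ++ v') = x :: v'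
        rw [secAt_spec hht [x] v', hfix, hsecx, h₁fix]
        rfl
      · show secAt h ([x] ++ v') = g
        rw [secAt_append hht, hsecx, h₁sec]

lemma sec_ker (hGt : G ≤ treeAut X) (hss : SelfSimilarSub G)
    (hsec : ∀ x : X, secImage G [x] = (G : Set (Equiv.Perm (List X))))
    (tau : Equiv.Perm (List X) → ℤ)
    (htau : ∀ g h, g ∈ G → h ∈ G → tau (g * h) = tau g + tau h)
    (hker : ∀ g h, g ∈ G → h ∈ G → tau g = 0 → tau h = 0 → g * h = h * g)
    (hW : ∀ z, z ∈ G → tau z ≠ 0 → ∃ b, b ∈ G ∧ tau b = 0 ∧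
       (b * z * b⁻¹ * z⁻¹) * z ≠ z * (b * z * b⁻¹ * z⁻¹)) :
    ∀ (v : List X) (h : Equiv.Perm (List X)), h ∈ G → h v = v → tau h = 0 →
      tau (secAt h v) = 0 := by
  intro v h hmem hfix htau0
  by_contra hne
  have hzG : secAt h v ∈ G := hss h hmem v
  obtain ⟨b, hbG, hb0, hnc⟩ := hW _ hzG hne
  apply hnc
  set z := secAt h v with hzdef
  have hVmul : ∀ w1 w2, (∃ k, k ∈ G ∧ k v = v ∧ tau k = 0 ∧ secAt k v = w1) →
      (∃ k, k ∈ G ∧ k v = v ∧ tau k = 0 ∧ secAt k v = w2) →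
      (∃ k, k ∈ G ∧ k v = v ∧ tau k = 0 ∧ secAt k v = w1 * w2) := by
    rintro w1 w2 ⟨k1, k1G, k1f, k10, rfl⟩ ⟨k2, k2G, k2f, k20, rfl⟩
    refine ⟨k1 * k2, mul_mem k1G k2G, ?_, ?_, ?_⟩
    · rw [Equiv.Perm.mul_apply, k2f, k1f]
    · rw [htau _ _ k1G k2G, k10, k20]; ring
    · rw [secAt_mul (hGt k1G) (hGt k2G) v, k2f]
  have hVinv : ∀ w, (∃ k, k ∈ G ∧ k v = v ∧ tau k = 0 ∧ secAt k v = w) →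
      (∃ k, k ∈ G ∧ k v = v ∧ tau k = 0 ∧ secAt k v = w⁻¹) := by
    rintro w ⟨k, kG, kf, k0, rfl⟩
    refine ⟨k⁻¹, inv_mem kG, fix_inv kf, ?_, sec_inv (hGt kG) kf⟩
    rw [tau_inv htau kG, k0, neg_zero]
  have hVconj : ∀ b', b' ∈ G → ∀ w, (∃ k, k ∈ G ∧ k v = v ∧ tau k = 0 ∧ secAt k v = w) →
      (∃ k, k ∈ G ∧ k v = v ∧ tau k = 0 ∧ secAt k v = b' * w * b'⁻¹) := by
    rintro b' hb'G w ⟨k, kG, kf, k0, rfl⟩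
    obtain ⟨B, BG, Bf, Bsec⟩ := wsr hGt hsec v b' hb'G
    have hBt := hGt BG
    have hBit := (treeAut X).inv_mem hBt
    have hkt := hGt kG
    refine ⟨B * k * B⁻¹, mul_mem (mul_mem BG kG) (inv_mem BG), ?_, ?_, ?_⟩
    · simp only [Equiv.Perm.mul_apply]
      rw [fix_inv Bf, kf, Bf]
    · rw [htau _ _ (mul_mem BG kG) (inv_mem BG), htau _ _ BG kG,
        tau_inv htau BG, k0]
      ring
    · have e1 : secAt (B * k * B⁻¹) v = secAt (B * k) (B⁻¹ v) * secAt B⁻¹ v :=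
        secAt_mul (mul_mem hBt hkt) hBit v
      have e2 : secAt (B * k) v = secAt B (k v) * secAt k v := secAt_mul hBt hkt v
      have e3 : secAt B⁻¹ v = (secAt B v)⁻¹ := sec_inv hBt Bf
      rw [e1, fix_inv Bf, e2, kf, e3, Bsec]
  have hVcomm : ∀ w1 w2, (∃ k, k ∈ G ∧ k v = v ∧ tau k = 0 ∧ secAt k v = w1) →
      (∃ k, k ∈ G ∧ k v = v ∧ tau k = 0 ∧ secAt k v = w2) → w1 * w2 = w2 * w1 := by
    rintro w1 w2 ⟨k1, k1G, k1f, k10, rfl⟩ ⟨k2, k2G, k2f, k20, rfl⟩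
    have hcomm : k1 * k2 = k2 * k1 := hker _ _ k1G k2G k10 k20
    have e1 : secAt (k1 * k2) v = secAt k1 v * secAt k2 v := by
      rw [secAt_mul (hGt k1G) (hGt k2G) v, k2f]
    have e2 : secAt (k2 * k1) v = secAt k2 v * secAt k1 v := by
      rw [secAt_mul (hGt k2G) (hGt k1G) v, k1f]
    rw [← e1, ← e2, hcomm]
  have hVz : ∃ k, k ∈ G ∧ k v = v ∧ tau k = 0 ∧ secAt k v = z :=
    ⟨h, hmem, hfix, htau0, rfl⟩
  have hu := hVmul _ _ (hVconj b hbG _ hVz) (hVinv _ hVz)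
  exact hVcomm _ _ hu hVz

lemma exists_mc (hGt : G ≤ treeAut X) (hss : SelfSimilarSub G)
    (hsec : ∀ x : X, secImage G [x] = (G : Set (Equiv.Perm (List X))))
    (tau : Equiv.Perm (List X) → ℤ)
    (htau : ∀ g h, g ∈ G → h ∈ G → tau (g * h) = tau g + tau h)
    (hker : ∀ g h, g ∈ G → h ∈ G → tau g = 0 → tau h = 0 → g * h = h * g)
    (hW : ∀ z, z ∈ G → tau z ≠ 0 → ∃ b, b ∈ G ∧ tau b = 0 ∧
       (b * z * b⁻¹ * z⁻¹) * z ≠ z * (b * z * b⁻¹ * z⁻¹))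
    (t0 : Equiv.Perm (List X)) (ht0 : t0 ∈ G) (htaut : tau t0 = 1)
    (v : List X) :
    ∃ (m : ℕ) (c : ℤ) (h₀ : Equiv.Perm (List X)), 0 < m ∧ (c = 1 ∨ c = -1) ∧
      h₀ ∈ G ∧ h₀ v = v ∧ tau h₀ = (m : ℤ) ∧
      ∀ h, h ∈ G → h v = v →
        ((m : ℤ) ∣ tau h ∧ (m : ℤ) * tau (secAt h v) = c * tau h) := by
  have hSK := sec_ker hGt hss hsec tau htau hker hW
  obtain ⟨H, HG, Hf, Hsec⟩ := wsr hGt hsec v t0 ht0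
  have hHne : tau H ≠ 0 := by
    intro h0
    have := hSK v H HG Hf h0
    rw [Hsec, htaut] at this
    exact one_ne_zero this
  have hne : {n : ℕ | 0 < n ∧ ∃ h, h ∈ G ∧ h v = v ∧ tau h = (n : ℤ)}.Nonempty := by
    rcases lt_or_gt_of_ne hHne with hlt | hgt
    · refine ⟨(tau H⁻¹).toNat, ?_, H⁻¹, inv_mem HG, fix_inv Hf, ?_⟩
      · rw [tau_inv htau HG]; omega
      · rw [tau_inv htau HG]; omega
    · exact ⟨(tau H).toNat, by omega, H, HG, Hf, by omega⟩
  set m := sInf {n : ℕ | 0 < n ∧ ∃ h, h ∈ G ∧ h v = v ∧ tau h = (n : ℤ)} with hmdef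
  have hm := Nat.sInf_mem hne
  rw [← hmdef] at hm
  obtain ⟨hmpos, h₀, h₀G, h₀f, h₀tau⟩ := hm
  have hmne : (m : ℤ) ≠ 0 := by exact_mod_cast hmpos.ne'
  have hdvd : ∀ h, h ∈ G → h v = v → (m : ℤ) ∣ tau h := by
    intro h hG hf
    have heq := Int.mul_ediv_add_emod (tau h) (m : ℤ)
    have hr0 : 0 ≤ tau h % (m : ℤ) := Int.emod_nonneg _ hmne
    have hrlt : tau h % (m : ℤ) < m := Int.emod_lt_of_pos _ (by exact_mod_cast hmpos)
    by_contra hnd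
    have hrne : tau h % (m : ℤ) ≠ 0 := by
      intro h0
      exact hnd ⟨tau h / (m : ℤ), by omega⟩
    have hk : ∃ k, k ∈ G ∧ k v = v ∧ tau k = (((tau h % (m : ℤ)).toNat : ℕ) : ℤ) := by
      refine ⟨h * h₀ ^ (-(tau h / (m : ℤ))), mul_mem hG (zpow_mem h₀G _), ?_, ?_⟩
      · rw [Equiv.Perm.mul_apply, fix_zpow h₀f, hf]
      · rw [htau _ _ hG (zpow_mem h₀G _), tau_zpow htau h₀G, h₀tau,
          Int.toNat_of_nonneg hr0]
        linear_combination -heq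
    have hmem2 : (tau h % (m : ℤ)).toNat ∈
        {n : ℕ | 0 < n ∧ ∃ h, h ∈ G ∧ h v = v ∧ tau h = (n : ℤ)} := ⟨by omega, hk⟩
    have := Nat.sInf_le hmem2
    rw [← hmdef] at this
    omega
  have hrel : ∀ h, h ∈ G → h v = v →
      (m : ℤ) * tau (secAt h v) = tau (secAt h₀ v) * tau h := by
    intro h hG hf
    obtain ⟨j, hj⟩ := hdvd h hG hf
    have hk0 : tau (h * h₀ ^ (-j)) = 0 := by
      rw [htau _ _ hG (zpow_mem h₀G _), tau_zpow htau h₀G, h₀tau, hj]; ring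
    have hsk := hSK v _ (mul_mem hG (zpow_mem h₀G _))
      (by rw [Equiv.Perm.mul_apply, fix_zpow h₀f, hf]) hk0
    have hsec1 : secAt (h * h₀ ^ (-j)) v = secAt h v * (secAt h₀ v) ^ (-j) := by
      rw [secAt_mul (hGt hG) (hGt (zpow_mem h₀G _)) v, fix_zpow h₀f,
        sec_zpow (hGt h₀G) h₀f]
    rw [hsec1, htau _ _ (hss h hG v) (zpow_mem (hss h₀ h₀G v) _),
      tau_zpow htau (hss h₀ h₀G v)] at hsk
    have ht : tau (secAt h v) = j * tau (secAt h₀ v) := by linarith [hsk]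
    rw [hj, ht]
    ring
  have hcunit : tau (secAt h₀ v) = 1 ∨ tau (secAt h₀ v) = -1 := by
    have h1 := hrel H HG Hf
    rw [Hsec, htaut, mul_one] at h1
    obtain ⟨e, he⟩ := hdvd H HG Hf
    rw [he] at h1
    have h2 : (m : ℤ) * 1 = (m : ℤ) * (tau (secAt h₀ v) * e) := by linear_combination h1
    have h3 := mul_left_cancel₀ hmne h2
    exact Int.isUnit_iff.mp (IsUnit.of_mul_eq_one e h3.symm)
  exact ⟨m, tau (secAt h₀ v), h₀, hmpos, hcunit, h₀G, h₀f, h₀tau,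
    fun h hG hf => ⟨hdvd h hG hf, hrel h hG hf⟩⟩

lemma level_const [Nonempty X] (hGt : G ≤ treeAut X) (hss : SelfSimilarSub G)
    (hsec : ∀ x : X, secImage G [x] = (G : Set (Equiv.Perm (List X))))
    (htr : ∀ x y : X, ∃ g ∈ G, g [x] = [y])
    (tau : Equiv.Perm (List X) → ℤ)
    (htau : ∀ g h, g ∈ G → h ∈ G → tau (g * h) = tau g + tau h)
    (hker : ∀ g h, g ∈ G → h ∈ G → tau g = 0 → tau h = 0 → g * h = h * g)
    (hW : ∀ z, z ∈ G → tau z ≠ 0 → ∃ b, b ∈ G ∧ tau b = 0 ∧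
       (b * z * b⁻¹ * z⁻¹) * z ≠ z * (b * z * b⁻¹ * z⁻¹))
    (t0 : Equiv.Perm (List X)) (ht0 : t0 ∈ G) (htaut : tau t0 = 1) :
    ∃ (m : ℕ) (c : ℤ), 0 < m ∧ (c = 1 ∨ c = -1) ∧
      ∀ (x : X) (h : Equiv.Perm (List X)), h ∈ G → h [x] = [x] →
        ((m : ℤ) ∣ tau h ∧ (m : ℤ) * tau (secAt h [x]) = c * tau h) := by
  have hmc : ∀ x : X, ∃ (m : ℕ) (c : ℤ) (h₀ : Equiv.Perm (List X)), 0 < m ∧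
      (c = 1 ∨ c = -1) ∧ h₀ ∈ G ∧ h₀ [x] = [x] ∧ tau h₀ = (m : ℤ) ∧
      ∀ h, h ∈ G → h [x] = [x] →
        ((m : ℤ) ∣ tau h ∧ (m : ℤ) * tau (secAt h [x]) = c * tau h) :=
    fun x => exists_mc hGt hss hsec tau htau hker hW t0 ht0 htaut [x]
  choose m c h₀ hmpos hcunit hG hf htau0 hprop using hmc
  have transfer : ∀ (x y : X) (g : Equiv.Perm (List X)), g ∈ G → g [x] = [y] →
      ∀ h, h ∈ G → h [x] = [x] →
        (g * h * g⁻¹) ∈ G ∧ (g * h * g⁻¹) [y] = [y] ∧ tau (g * h * g⁻¹) = tau h ∧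
        tau (secAt (g * h * g⁻¹) [y]) = tau (secAt h [x]) := by
    intro x y g hgG hgxy h hG' hf'
    have hgt := hGt hgG
    have hgit := (treeAut X).inv_mem hgt
    have hht := hGt hG'
    have hginvy : g⁻¹ [y] = [x] := by rw [← hgxy, perm_inv_apply_self]
    refine ⟨mul_mem (mul_mem hgG hG') (inv_mem hgG), ?_, ?_, ?_⟩
    · simp only [Equiv.Perm.mul_apply]
      rw [hginvy, hf', hgxy]
    · rw [htau _ _ (mul_mem hgG hG') (inv_mem hgG), htau _ _ hgG hG', tau_inv htau hgG]
      ring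
    · have e1 : secAt (g * h * g⁻¹) [y] = secAt (g * h) (g⁻¹ [y]) * secAt g⁻¹ [y] :=
        secAt_mul (mul_mem hgt hht) hgit [y]
      have e2 : secAt (g * h) [x] = secAt g (h [x]) * secAt h [x] := secAt_mul hgt hht [x]
      have e3 : secAt g⁻¹ [y] = (secAt g [x])⁻¹ := by
        rw [← hgxy]; exact secAt_inv hgt [x]
      rw [e1, hginvy, e2, hf', e3] at *
      rw [htau _ _ (mul_mem (hss g hgG [x]) (hss h hG' [x])) (inv_mem (hss g hgG [x])),
        htau _ _ (hss g hgG [x]) (hss h hG' [x]), tau_inv htau (hss g hgG [x])]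
      ring
  have hdvd_trans : ∀ x y : X, (m y : ℤ) ∣ (m x : ℤ) := by
    intro x y
    obtain ⟨g, hgG, hgxy⟩ := htr x y
    obtain ⟨hG', hf', htaux, -⟩ := transfer x y g hgG hgxy (h₀ x) (hG x) (hf x)
    have hd := (hprop y _ hG' hf').1
    rwa [htaux, htau0 x] at hd
  have hmeq : ∀ x y : X, m x = m y := by
    intro x y
    exact Nat.dvd_antisymm (by exact_mod_cast hdvd_trans y x)
      (by exact_mod_cast hdvd_trans x y)
  have hceq : ∀ x y : X, c x = c y := by
    intro x y
    obtain ⟨g, hgG, hgxy⟩ := htr x y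
    obtain ⟨hG', hf', htaux, hsecx⟩ := transfer x y g hgG hgxy (h₀ x) (hG x) (hf x)
    have r1 := (hprop y _ hG' hf').2
    rw [htaux, hsecx, htau0 x, ← hmeq x y] at r1
    have r2 := (hprop x _ (hG x) (hf x)).2
    rw [htau0 x] at r2
    have hmne : ((m x : ℕ) : ℤ) ≠ 0 := by exact_mod_cast (hmpos x).ne'
    have h5 : (c x) * ((m x : ℕ) : ℤ) = c y * ((m x : ℕ) : ℤ) := by rw [← r2, r1]
    exact mul_right_cancel₀ hmne h5
  obtain ⟨x₀⟩ := (inferInstance : Nonempty X)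
  refine ⟨m x₀, c x₀, hmpos x₀, hcunit x₀, fun x h hG' hf' => ?_⟩
  have hp := hprop x h hG' hf'
  rwa [hmeq x x₀, hceq x x₀] at hp

end Core

section Level

attribute [local instance] Classical.propDecidable

variable (X) in
noncomputable def levelFinset [Finite X] (n : ℕ) : Finset (List X) :=
  (List.finite_length_eq X n).toFinset

lemma mem_levelFinset [Finite X] {n : ℕ} {v : List X} :
    v ∈ levelFinset X n ↔ v.length = n := Set.Finite.mem_toFinset _

lemma levelFinset_zero [Finite X] : levelFinset X 0 = {([] : List X)} := by
  ext v
  simp [mem_levelFinset, List.length_eq_zero_iff]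

lemma level_succ_eq [Fintype X] (n : ℕ) :
    levelFinset X (n+1) =
      (Finset.univ ×ˢ levelFinset X n).image (fun p : X × List X => p.1 :: p.2) := by
  ext v
  simp only [Finset.mem_image, Finset.mem_product, Finset.mem_univ, true_and,
    mem_levelFinset]
  constructor
  · intro hv
    cases v with
    | nil => simp at hv
    | cons a t => exact ⟨(a, t), by simpa using hv, rfl⟩
  · rintro ⟨⟨a, t⟩, ht, rfl⟩
    simpa using ht

lemma sum_level_succ [Fintype X] {M : Type} [AddCommMonoid M] (n : ℕ) (f : List X → M) :
    ∑ v ∈ levelFinset X (n+1), f v = ∑ x : X, ∑ w ∈ levelFinset X n, f (x :: w) := by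
  rw [level_succ_eq, Finset.sum_image ?inj, Finset.sum_product]
  case inj =>
    rintro ⟨a, t⟩ h1 ⟨b, u⟩ h2 he
    injection he with h1' h2'
    subst h1'; subst h2'; rfl

lemma card_level [Fintype X] (n : ℕ) : (levelFinset X n).card = Fintype.card X ^ n := by
  induction n with
  | zero => simp [levelFinset_zero]
  | succ n ih =>
      have h1 : (levelFinset X (n+1)).card = ∑ v ∈ levelFinset X (n+1), 1 := by
        simp
      rw [h1, sum_level_succ n (fun _ => 1)]
      simp [ih, pow_succ, mul_comm]

lemma sum_level_perm [Fintype X] {g : Equiv.Perm (List X)} (hg : g ∈ treeAut X) (n : ℕ)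
    (f : List X → ℤ) :
    ∑ v ∈ levelFinset X n, f (g v) = ∑ v ∈ levelFinset X n, f v := by
  refine Finset.sum_equiv g ?_ ?_
  · intro v
    simp only [mem_levelFinset]
    constructor
    · intro h
      rw [show (g : Equiv.Perm (List X)) v = g v from rfl, length_apply hg]
      exact h
    · intro h
      rw [show (g : Equiv.Perm (List X)) v = g v from rfl, length_apply hg] at h
      exact h
  · intro v _
    rfl

variable {G : Subgroup (Equiv.Perm (List X))}

noncomputable def Tsum [Finite X] (tau : Equiv.Perm (List X) → ℤ) (n : ℕ)
    (g : Equiv.Perm (List X)) : ℤ :=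
  ∑ v ∈ levelFinset X n, tau (secAt g v)

lemma Tsum_zero [Fintype X] (tau : Equiv.Perm (List X) → ℤ) {g : Equiv.Perm (List X)}
    (hg : g ∈ treeAut X) : Tsum tau 0 g = tau g := by
  rw [Tsum, levelFinset_zero, Finset.sum_singleton, secAt_nil hg]

lemma Tsum_one_eq [Fintype X] (tau : Equiv.Perm (List X) → ℤ) (g : Equiv.Perm (List X)) :
    Tsum tau 1 g = ∑ x : X, tau (secAt g [x]) := by
  rw [Tsum, sum_level_succ 0 (fun v => tau (secAt g v))]
  refine Finset.sum_congr rfl fun x _ => ?_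
  rw [levelFinset_zero, Finset.sum_singleton]

lemma Tsum_succ [Fintype X] (tau : Equiv.Perm (List X) → ℤ) {g : Equiv.Perm (List X)}
    (hg : g ∈ treeAut X) (n : ℕ) :
    Tsum tau (n+1) g = ∑ x : X, Tsum tau n (secAt g [x]) := by
  rw [Tsum, sum_level_succ n (fun v => tau (secAt g v))]
  refine Finset.sum_congr rfl fun x _ => ?_
  rw [Tsum]
  refine Finset.sum_congr rfl fun w _ => ?_
  rw [← List.singleton_append, secAt_append hg]

lemma Tsum_mul [Fintype X] (hGt : G ≤ treeAut X) (hss : SelfSimilarSub G)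
    (tau : Equiv.Perm (List X) → ℤ)
    (htau : ∀ g h, g ∈ G → h ∈ G → tau (g * h) = tau g + tau h)
    {g h : Equiv.Perm (List X)} (hg : g ∈ G) (hh : h ∈ G) (n : ℕ) :
    Tsum tau n (g * h) = Tsum tau n g + Tsum tau n h := by
  have e : ∀ v ∈ levelFinset X n, tau (secAt (g * h) v) =
      tau (secAt g (h v)) + tau (secAt h v) := by
    intro v _
    rw [secAt_mul (hGt hg) (hGt hh) v]
    exact htau _ _ (hss g hg (h v)) (hss h hh v)
  rw [Tsum, Finset.sum_congr rfl e, Finset.sum_add_distrib]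
  congr 1
  exact sum_level_perm (hGt hh) n (fun w => tau (secAt g w))

lemma Tsum_pow [Fintype X] (hGt : G ≤ treeAut X) (hss : SelfSimilarSub G)
    (tau : Equiv.Perm (List X) → ℤ)
    (htau : ∀ g h, g ∈ G → h ∈ G → tau (g * h) = tau g + tau h)
    {g : Equiv.Perm (List X)} (hg : g ∈ G) (n : ℕ) (k : ℕ) :
    Tsum tau n (g ^ k) = k * Tsum tau n g := by
  induction k with
  | zero =>
      have : Tsum tau n (1 : Equiv.Perm (List X)) = 0 := by
        rw [Tsum]
        refine Finset.sum_eq_zero fun v _ => ?_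
        rw [secAt_one, tau_one htau]
      simpa using this
  | succ k ih =>
      rw [pow_succ, Tsum_mul hGt hss tau htau (pow_mem hg k) hg, ih]
      push_cast
      ring

lemma growth_aux (m : ℕ) (hm : 1 ≤ m) : ∀ k : ℕ, m ^ k * (m + k + 1) ≤ (m+1) ^ (k+1) := by
  intro k
  induction k with
  | zero => simp
  | succ k ih =>
      have h2 : m ^ k * (m + k + 1) * (m+1) ≤ (m+1)^(k+1) * (m+1) :=
        Nat.mul_le_mul_right _ ih
      have h3 : m ^ (k+1) * (m + (k+1) + 1) ≤ m ^ k * (m + k + 1) * (m+1) := by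
        have hmk : m ^ k * m = m ^ (k+1) := (pow_succ m k).symm
        nlinarith [pow_pos (Nat.lt_of_lt_of_le Nat.zero_lt_one hm) k]
      calc m ^ (k+1) * (m + (k+1) + 1) ≤ m ^ k * (m + k + 1) * (m+1) := h3
        _ ≤ (m+1)^(k+1) * (m+1) := h2
        _ = (m+1)^(k+1+1) := (pow_succ _ _).symm

lemma m_eq_q [Fintype X] [Nonempty X] (hGt : G ≤ treeAut X) (hss : SelfSimilarSub G)
    (tau : Equiv.Perm (List X) → ℤ)
    (htau : ∀ g h, g ∈ G → h ∈ G → tau (g * h) = tau g + tau h)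
    (m : ℕ) (c : ℤ) (hmpos : 0 < m) (hcu : c = 1 ∨ c = -1)
    (hQ : ∀ (x : X) (h : Equiv.Perm (List X)), h ∈ G → h [x] = [x] →
        ((m : ℤ) ∣ tau h ∧ (m : ℤ) * tau (secAt h [x]) = c * tau h))
    (t0 : Equiv.Perm (List X)) (ht0 : t0 ∈ G) (htaut : tau t0 = 1)
    (Kt Ct : ℕ)
    (hKt : ∀ n : ℕ, 1 ≤ n → Set.ncard {v : List X | v.length = n ∧ secAt t0 v ≠ 1} ≤ Kt)
    (hCt : ∀ v : List X, (tau (secAt t0 v)).natAbs ≤ Ct) :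
    m = Fintype.card X := by
  haveI := Classical.decEq X
  set q := Fintype.card X with hq
  have hqpos : 0 < q := Fintype.card_pos
  have glob1 : ∀ g, g ∈ G → (m : ℤ) * Tsum tau 1 g = (q : ℤ) * c * tau g := by
    intro g hgG
    have hgt := hGt hgG
    choose σ hσ using exists_singleton hgt
    have hσinj : Function.Injective σ := by
      intro x y hxy
      have h1 : g [x] = g [y] := by rw [hσ x, hσ y, hxy]
      have h2 := g.injective h1
      simpa using h2
    set e : Equiv.Perm X := Equiv.ofBijective σ (Finite.injective_iff_bijective.mp hσinj)
      with he
    have hpow : ∀ (k : ℕ) (x : X), (g ^ k) [x] = [(e ^ k) x] := by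
      intro k
      induction k with
      | zero => intro x; simp
      | succ k ih =>
          intro x
          rw [pow_succ, Equiv.Perm.mul_apply, hσ x, ih (σ x), pow_succ,
            Equiv.Perm.mul_apply]
          rfl
    have hRpos : 0 < orderOf e := orderOf_pos e
    set R := orderOf e with hR
    have hfixall : ∀ x : X, (g ^ R) [x] = [x] := by
      intro x
      rw [hpow R x, pow_orderOf_eq_one e]
      rfl
    have hgR : g ^ R ∈ G := pow_mem hgG R
    have hT1 : (m:ℤ) * Tsum tau 1 (g ^ R) = (q:ℤ) * c * tau (g ^ R) := by
      rw [Tsum_one_eq, Finset.mul_sum,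
        Finset.sum_congr rfl (fun x _ => (hQ x _ hgR (hfixall x)).2),
        Finset.sum_const, Finset.card_univ, nsmul_eq_mul, ← hq]
      ring
    rw [Tsum_pow hGt hss tau htau hgG 1 R, tau_pow htau hgG R] at hT1
    have hRne : ((R:ℕ) : ℤ) ≠ 0 := by exact_mod_cast hRpos.ne'
    apply mul_left_cancel₀ hRne
    linear_combination hT1
  have main : ∀ (n : ℕ) (g : Equiv.Perm (List X)), g ∈ G →
      (m:ℤ)^n * Tsum tau n g = ((q:ℤ)*c)^n * tau g := by
    intro n
    induction n with
    | zero => intro g hgG; simp [Tsum_zero tau (hGt hgG)]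
    | succ n ih =>
        intro g hgG
        calc (m:ℤ)^(n+1) * Tsum tau (n+1) g
            = ∑ x : X, (m:ℤ)^(n+1) * Tsum tau n (secAt g [x]) := by
              rw [Tsum_succ tau (hGt hgG) n, Finset.mul_sum]
          _ = ∑ x : X, ((m:ℤ) * ((q:ℤ)*c)^n) * tau (secAt g [x]) := by
              refine Finset.sum_congr rfl fun x _ => ?_
              have := ih _ (hss g hgG [x])
              calc (m:ℤ)^(n+1) * Tsum tau n (secAt g [x])
                  = (m:ℤ) * ((m:ℤ)^n * Tsum tau n (secAt g [x])) := by ring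
                _ = (m:ℤ) * (((q:ℤ)*c)^n * tau (secAt g [x])) := by rw [this]
                _ = ((m:ℤ) * ((q:ℤ)*c)^n) * tau (secAt g [x]) := by ring
          _ = ((q:ℤ)*c)^n * ((m:ℤ) * Tsum tau 1 g) := by
              rw [← Finset.mul_sum, ← Tsum_one_eq]
              ring
          _ = ((q:ℤ)*c)^(n+1) * tau g := by
              rw [glob1 g hgG]
              ring
  have hc1 : c.natAbs = 1 := by rcases hcu with h | h <;> simp [h]
  have habs : ∀ n : ℕ, q ^ n = m ^ n * (Tsum tau n t0).natAbs := by
    intro n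
    have h1 := main n t0 ht0
    rw [htaut, mul_one] at h1
    have h2 := congrArg Int.natAbs h1
    rw [Int.natAbs_mul, Int.natAbs_pow, Int.natAbs_pow, Int.natAbs_mul, hc1,
      Int.natAbs_natCast, Int.natAbs_natCast, mul_one] at h2
    omega
  have hTb : ∀ n : ℕ, 1 ≤ n → (Tsum tau n t0).natAbs ≤ Kt * Ct := by
    intro n hn
    have h1 : Tsum tau n t0 = ∑ v ∈ (levelFinset X n).filter (fun v => secAt t0 v ≠ 1),
        tau (secAt t0 v) := by
      rw [Tsum]
      refine (Finset.sum_filter_of_ne ?_).symm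
      intro v _ hne h1'
      rw [h1', tau_one htau] at hne
      exact hne rfl
    have hcard : ((levelFinset X n).filter (fun v => secAt t0 v ≠ 1)).card ≤ Kt := by
      have hsub : (((levelFinset X n).filter (fun v => secAt t0 v ≠ 1) : Finset (List X)) :
          Set (List X)) = {v : List X | v.length = n ∧ secAt t0 v ≠ 1} := by
        ext v
        simp [mem_levelFinset]
      have h2 := hKt n hn
      rw [← hsub, Set.ncard_coe_finset] at h2
      exact h2
    have hzb : |Tsum tau n t0| ≤ ((Kt * Ct : ℕ) : ℤ) := by
      calc |Tsum tau n t0|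
          = |∑ v ∈ (levelFinset X n).filter (fun v => secAt t0 v ≠ 1),
              tau (secAt t0 v)| := by rw [h1]
        _ ≤ ∑ v ∈ (levelFinset X n).filter (fun v => secAt t0 v ≠ 1),
              |tau (secAt t0 v)| := Finset.abs_sum_le_sum_abs _ _
        _ ≤ ∑ _v ∈ (levelFinset X n).filter (fun v => secAt t0 v ≠ 1), ((Ct : ℕ) : ℤ) := by
              refine Finset.sum_le_sum (fun v _ => ?_)
              rw [Int.abs_eq_natAbs]
              exact_mod_cast hCt v
        _ = (((levelFinset X n).filter (fun v => secAt t0 v ≠ 1)).card : ℤ) * Ct := by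
              rw [Finset.sum_const, nsmul_eq_mul]
        _ ≤ ((Kt * Ct : ℕ) : ℤ) := by
              push_cast
              exact mul_le_mul_of_nonneg_right (by exact_mod_cast hcard) (by positivity)
    rw [Int.abs_eq_natAbs] at hzb
    exact_mod_cast hzb
  have hmdvdq : m ∣ q := by
    have h1 := glob1 t0 ht0
    rw [htaut, mul_one] at h1
    have h2 : (m:ℤ) ∣ (q:ℤ) * c := ⟨_, h1.symm⟩
    have h3 : (m:ℤ) ∣ (q:ℤ) := by
      rcases hcu with h | h
      · simpa [h] using h2
      · rw [h] at h2
        simpa using h2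
    exact_mod_cast h3
  by_contra hne'
  have hmlt : m < q := lt_of_le_of_ne (Nat.le_of_dvd hqpos hmdvdq) hne'
  set B := Kt * Ct with hB
  set k := m * B with hk
  have hgrow := growth_aux m hmpos k
  have h2 : (m+1)^(k+1) ≤ q^(k+1) := Nat.pow_le_pow_left (by omega) (k+1)
  have h3 : q^(k+1) ≤ m^(k+1) * B := by
    rw [habs (k+1)]
    exact Nat.mul_le_mul_left _ (hTb (k+1) (by omega))
  have h4 : m^(k+1) * B = m^k * k := by
    rw [pow_succ, hk]
    ring
  have h5 : m ^ k * (m + k + 1) ≤ m ^ k * k := by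
    calc m ^ k * (m + k + 1) ≤ (m+1)^(k+1) := hgrow
      _ ≤ q^(k+1) := h2
      _ ≤ m^(k+1) * B := h3
      _ = m^k * k := h4
  have hPpos : 0 < m ^ k := pow_pos hmpos k
  have h6 : m + k + 1 ≤ k := Nat.le_of_mul_le_mul_left h5 hPpos
  omega

end Level

section Core2

attribute [local instance] Classical.propDecidable

variable {G : Subgroup (Equiv.Perm (List X))}

lemma rigidity [Fintype X] [Nonempty X] (hGt : G ≤ treeAut X) (hss : SelfSimilarSub G)
    (hsec : ∀ x : X, secImage G [x] = (G : Set (Equiv.Perm (List X))))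
    (htr : ∀ x y : X, ∃ g ∈ G, g [x] = [y])
    (tau : Equiv.Perm (List X) → ℤ)
    (htau : ∀ g h, g ∈ G → h ∈ G → tau (g * h) = tau g + tau h)
    (hker : ∀ g h, g ∈ G → h ∈ G → tau g = 0 → tau h = 0 → g * h = h * g)
    (hW : ∀ z, z ∈ G → tau z ≠ 0 → ∃ b, b ∈ G ∧ tau b = 0 ∧
       (b * z * b⁻¹ * z⁻¹) * z ≠ z * (b * z * b⁻¹ * z⁻¹))
    (t0 : Equiv.Perm (List X)) (ht0 : t0 ∈ G) (htaut : tau t0 = 1)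
    (Kt Ct : ℕ)
    (hKt : ∀ n : ℕ, 1 ≤ n → Set.ncard {v : List X | v.length = n ∧ secAt t0 v ≠ 1} ≤ Kt)
    (hCt : ∀ v : List X, (tau (secAt t0 v)).natAbs ≤ Ct) :
    ∀ (v : List X) (h : Equiv.Perm (List X)), h ∈ G → h v = v →
      ((Fintype.card X : ℤ))^(v.length) ∣ tau h := by
  obtain ⟨m, c, hmpos, hcu, hQ⟩ :=
    level_const hGt hss hsec htr tau htau hker hW t0 ht0 htaut
  have hmq : m = Fintype.card X :=
    m_eq_q hGt hss tau htau m c hmpos hcu hQ t0 ht0 htaut Kt Ct hKt hCt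
  rw [hmq] at hQ
  have hc2 : c * c = 1 := by rcases hcu with h' | h' <;> rw [h'] <;> ring
  intro v
  induction v using List.reverseRecOn with
  | nil =>
      intro h hG _
      simpa using one_dvd (tau h)
  | append_singleton v y ih =>
      intro h hG hf
      have hht := hGt hG
      have heq : v ++ [y] = h v ++ secAt h v [y] := by
        rw [← hf, secAt_spec hht v [y]]
      obtain ⟨hfv, hfy⟩ := List.append_inj heq (length_apply hht v).symm
      have hfv' : h v = v := hfv.symm
      have hsG : secAt h v ∈ G := hss h hG v
      have hsfix : secAt h v [y] = [y] := hfy.symm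
      have hrel := (hQ y (secAt h v) hsG hsfix).2
      have hqs : ((Fintype.card X : ℕ) : ℤ) ∣ tau (secAt h v) := by
        refine ⟨c * tau (secAt (secAt h v) [y]), ?_⟩
        linear_combination (-c) * hrel - tau (secAt h v) * hc2
      obtain ⟨mv, cv, h₀, hmvpos, hcvu, h₀G, h₀f, h₀tau, hv⟩ :=
        exists_mc hGt hss hsec tau htau hker hW t0 ht0 htaut v
      have hcv2 : cv * cv = 1 := by rcases hcvu with h' | h' <;> rw [h'] <;> ring
      have hdvd_mv : ((Fintype.card X : ℤ))^(v.length) ∣ (mv : ℤ) := by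
        rw [← h₀tau]
        exact ih h₀ h₀G h₀f
      have hrelv := (hv h hG hfv').2
      have hdd : ((Fintype.card X : ℤ))^(v.length) * (Fintype.card X : ℤ) ∣
          (mv : ℤ) * tau (secAt h v) := mul_dvd_mul hdvd_mv hqs
      rw [hrelv] at hdd
      obtain ⟨w, hw⟩ := hdd
      have hfin : ((Fintype.card X : ℤ))^(v.length) * (Fintype.card X : ℤ) ∣ tau h := by
        refine ⟨cv * w, ?_⟩
        linear_combination cv * hw - tau h * hcv2
      have hlen : (v ++ [y]).length = v.length + 1 := by simp
      rw [hlen, pow_succ]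
      exact hfin

lemma core_kill [Fintype X] [Nonempty X] (hGt : G ≤ treeAut X) (hss : SelfSimilarSub G)
    (hsec : ∀ x : X, secImage G [x] = (G : Set (Equiv.Perm (List X))))
    (htr : ∀ x y : X, ∃ g ∈ G, g [x] = [y])
    (tau : Equiv.Perm (List X) → ℤ)
    (htau : ∀ g h, g ∈ G → h ∈ G → tau (g * h) = tau g + tau h)
    (hker : ∀ g h, g ∈ G → h ∈ G → tau g = 0 → tau h = 0 → g * h = h * g)
    (hW : ∀ z, z ∈ G → tau z ≠ 0 → ∃ b, b ∈ G ∧ tau b = 0 ∧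
       (b * z * b⁻¹ * z⁻¹) * z ≠ z * (b * z * b⁻¹ * z⁻¹))
    (t0 : Equiv.Perm (List X)) (ht0 : t0 ∈ G) (htaut : tau t0 = 1)
    (Kt Ct : ℕ)
    (hKt : ∀ n : ℕ, 1 ≤ n → Set.ncard {v : List X | v.length = n ∧ secAt t0 v ≠ 1} ≤ Kt)
    (hCt : ∀ v : List X, (tau (secAt t0 v)).natAbs ≤ Ct)
    (b0 : Equiv.Perm (List X)) (hb0G : b0 ∈ G) (htaub : tau b0 = 0) : b0 = 1 := by
  have hrig := rigidity hGt hss hsec htr tau htau hker hW t0 ht0 htaut Kt Ct hKt hCt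
  set q := Fintype.card X with hqdef
  have hfix : ∀ v : List X, b0 v = v := by
    intro v
    set n := v.length with hn
    have hdvd_fix : ∀ d : ℕ, (t0 ^ d) v = v → q ^ n ∣ d := by
      intro d hd
      have h8 := hrig v _ (pow_mem ht0 d) hd
      rw [tau_pow htau ht0, htaut, mul_one] at h8
      have h9 : ((q ^ n : ℕ) : ℤ) ∣ ((d : ℕ) : ℤ) := by
        push_cast
        exact h8
      exact_mod_cast h9
    have hstep : ∀ i j : ℕ, i < j → (t0 ^ i) v = (t0 ^ j) v → (t0 ^ (j - i)) v = v := by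
      intro i j hij heq
      have h1 : (t0 ^ (i + (j - i))) v = (t0 ^ i) v := by
        rw [show i + (j - i) = j by omega]
        exact heq.symm
      rw [pow_add, Equiv.Perm.mul_apply] at h1
      exact (t0 ^ i).injective h1
    have hFinj : Function.Injective (fun i : Fin (q ^ n) => (t0 ^ (i : ℕ)) v) := by
      intro i j heq
      simp only at heq
      by_contra hne
      rcases lt_or_gt_of_ne hne with h | h
      · have hlt : (i : ℕ) < (j : ℕ) := h
        have hd := hdvd_fix _ (hstep _ _ hlt heq)
        have := Nat.le_of_dvd (by omega) hd
        have := j.isLt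
        omega
      · have hlt : (j : ℕ) < (i : ℕ) := h
        have hd := hdvd_fix _ (hstep _ _ hlt heq.symm)
        have := Nat.le_of_dvd (by omega) hd
        have := i.isLt
        omega
    have hsub : Finset.image (fun i : Fin (q ^ n) => (t0 ^ (i : ℕ)) v) Finset.univ ⊆
        levelFinset X n := by
      intro w hw
      obtain ⟨i, -, rfl⟩ := Finset.mem_image.mp hw
      rw [mem_levelFinset, length_apply ((treeAut X).pow_mem (hGt ht0) _)]
    have heq2 : Finset.image (fun i : Fin (q ^ n) => (t0 ^ (i : ℕ)) v) Finset.univ =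
        levelFinset X n := by
      refine Finset.eq_of_subset_of_card_le hsub ?_
      rw [Finset.card_image_of_injective _ hFinj, Finset.card_univ, Fintype.card_fin,
        card_level]
    have hb0v : b0 v ∈ levelFinset X n := by
      rw [mem_levelFinset, length_apply (hGt hb0G)]
    rw [← heq2] at hb0v
    obtain ⟨j, -, hj⟩ := Finset.mem_image.mp hb0v
    have hgfix : ((t0 ^ (j : ℕ))⁻¹ * b0) v = v := by
      rw [Equiv.Perm.mul_apply, ← hj, perm_inv_apply_self]
    have hgG : (t0 ^ (j : ℕ))⁻¹ * b0 ∈ G := mul_mem (inv_mem (pow_mem ht0 _)) hb0G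
    have hdvd := hrig v _ hgG hgfix
    rw [htau _ _ (inv_mem (pow_mem ht0 _)) hb0G, tau_inv htau (pow_mem ht0 _),
      tau_pow htau ht0, htaut, htaub] at hdvd
    have h8 : ((q ^ n : ℕ) : ℤ) ∣ ((j : ℕ) : ℤ) := by
      rw [← hn] at hdvd
      have h10 : ((q : ℕ) : ℤ) ^ n ∣ -((j : ℕ) : ℤ) := by
        simpa using hdvd
      have h9 : ((q : ℕ) : ℤ) ^ n ∣ ((j : ℕ) : ℤ) := dvd_neg.mp h10
      push_cast
      exact h9
    have h9 : q ^ n ∣ (j : ℕ) := by exact_mod_cast h8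
    have hjz : (j : ℕ) = 0 := Nat.eq_zero_of_dvd_of_lt h9 j.isLt
    rw [hjz, pow_zero] at hj
    exact hj.symm
  refine Equiv.ext fun v => ?_
  rw [hfix v]
  rfl

end Core2

end AuxWreath

/-- **For every nontrivial abelian group `A`, the wreath product `A ≀ ℤ` has no faithful
representation as a self-replicating bounded automata group.** -/
theorem wreath_no_faithful_selfReplicating_representation
    (A : Type u) [CommGroup A] [Nontrivial A] :
    ¬ ∃ (X : Type u) (_ : Finite X) (_ : Nontrivial X)
        (φ : wreathZ A →* Equiv.Perm (List X)),
        Function.Injective φ ∧ SelfReplicating φ.range ∧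
        BoundedAutomataGroup φ.range := by
  classical
  rintro ⟨X, hfin, hnt, φ, hinj, hSR, hBAG⟩
  haveI : Finite X := hfin
  haveI : Nontrivial X := hnt
  haveI : Nonempty X := inferInstance
  haveI : Fintype X := Fintype.ofFinite X
  obtain ⟨hssG, htrans, hsec⟩ : SelfSimilarSub φ.range ∧
      (∀ x y : X, ∃ g ∈ φ.range, g [x] = [y]) ∧
      (∀ x : X, secImage φ.range [x] = (φ.range : Set (Equiv.Perm (List X)))) := hSR
  obtain ⟨hle, hFG, hss2, hbag⟩ : φ.range ≤ treeAut X ∧ φ.range.FG ∧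
      SelfSimilarSub φ.range ∧
      (∀ g ∈ φ.range, IsBoundedAut g ∧ IsFiniteState g) := hBAG
  set tau : Equiv.Perm (List X) → ℤ := fun g =>
    if h : g ∈ φ.range then
      Multiplicative.toAdd (SemidirectProduct.rightHom
        ((MonoidHom.ofInjective hinj).symm ⟨g, h⟩)) else 0 with htaudef
  have hphi : ∀ w : wreathZ A, (φ w : Equiv.Perm (List X)) ∈ φ.range := fun w => ⟨w, rfl⟩
  have hesymm : ∀ (w : wreathZ A) (h : φ w ∈ φ.range),
      (MonoidHom.ofInjective hinj).symm ⟨φ w, h⟩ = w := by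
    intro w h
    have h1 : MonoidHom.ofInjective hinj w = ⟨φ w, h⟩ :=
      Subtype.ext (MonoidHom.ofInjective_apply hinj)
    rw [← h1, MulEquiv.symm_apply_apply]
  have htauphi : ∀ w : wreathZ A,
      tau (φ w) = Multiplicative.toAdd (SemidirectProduct.rightHom w) := by
    intro w
    rw [htaudef]
    simp only []
    rw [dif_pos (hphi w), hesymm w (hphi w)]
  have htau : ∀ g h, g ∈ φ.range → h ∈ φ.range →
      tau (g * h) = tau g + tau h := by
    intro g h hg hh
    obtain ⟨wg, rfl⟩ := MonoidHom.mem_range.mp hg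
    obtain ⟨wh, rfl⟩ := MonoidHom.mem_range.mp hh
    rw [← map_mul, htauphi, htauphi, htauphi]
    exact congrArg Multiplicative.toAdd
      (map_mul (SemidirectProduct.rightHom : wreathZ A →* Multiplicative ℤ) wg wh)
  have hker : ∀ g h, g ∈ φ.range → h ∈ φ.range → tau g = 0 → tau h = 0 →
      g * h = h * g := by
    intro g h hg hh hg0 hh0
    obtain ⟨wg, rfl⟩ := MonoidHom.mem_range.mp hg
    obtain ⟨wh, rfl⟩ := MonoidHom.mem_range.mp hh
    rw [htauphi] at hg0 hh0
    have hbase : ∀ w : wreathZ A,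
        Multiplicative.toAdd (SemidirectProduct.rightHom w) = 0 →
        ∃ f, SemidirectProduct.inl f = w := by
      intro w hw0
      have hker' : w ∈ (SemidirectProduct.rightHom :
          wreathZ A →* Multiplicative ℤ).ker := by
        refine MonoidHom.mem_ker.mpr ?_
        exact Multiplicative.toAdd.injective hw0
      rw [← SemidirectProduct.range_inl_eq_ker_rightHom] at hker'
      exact hker'
    obtain ⟨fg, rfl⟩ := hbase wg hg0
    obtain ⟨fh, rfl⟩ := hbase wh hh0
    refine (map_mul φ _ _).symm.trans (Eq.trans ?_ (map_mul φ _ _))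
    refine congrArg φ ?_
    calc SemidirectProduct.inl fg * SemidirectProduct.inl fh
        = SemidirectProduct.inl (fg * fh) := (map_mul _ fg fh).symm
      _ = SemidirectProduct.inl (fh * fg) := by rw [mul_comm fg fh]
      _ = SemidirectProduct.inl fh * SemidirectProduct.inl fg := map_mul _ fh fg
  -- the distinguished elements
  set t0 : Equiv.Perm (List X) :=
    φ (SemidirectProduct.inr (Multiplicative.ofAdd (1 : ℤ))) with ht0def
  have ht0 : t0 ∈ φ.range := hphi _
  have htaut : tau t0 = 1 := by
    rw [ht0def]
    exact (htauphi (SemidirectProduct.inr (Multiplicative.ofAdd (1 : ℤ)))).trans (by simp)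
  obtain ⟨a, ha⟩ := exists_ne (1 : A)
  have hd0mem : (fun n : ℤ => if n = 0 then a else 1) ∈ finSuppSubgroup A := by
    show {n : ℤ | (if n = 0 then a else 1) ≠ 1}.Finite
    refine Set.Finite.subset (Set.finite_singleton 0) ?_
    intro n hn
    simp only [Set.mem_setOf_eq] at hn
    simp only [Set.mem_singleton_iff]
    by_contra h0
    rw [if_neg h0] at hn
    exact hn rfl
  set d0 : ↥(finSuppSubgroup A) := ⟨fun n : ℤ => if n = 0 then a else 1, hd0mem⟩
    with hd0def
  have hd0ne : d0 ≠ 1 := by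
    intro h0
    have h1 := congrArg (fun f : ↥(finSuppSubgroup A) => (f : ℤ → A) 0) h0
    simp only [hd0def, if_pos rfl, OneMemClass.coe_one, Pi.one_apply] at h1
    exact ha h1
  -- the shift-invariance lemma
  have hshift : ∀ (c : ↥(finSuppSubgroup A)) (k : ℤ), k ≠ 0 →
      (∀ n : ℤ, (c : ℤ → A) (n - k) = (c : ℤ → A) n) → c = 1 := by
    intro c k hk hc
    by_contra hcne
    have hex : ∃ n₀ : ℤ, (c : ℤ → A) n₀ ≠ 1 := by
      by_contra hall
      push_neg at hall
      exact hcne (Subtype.ext (funext fun n => hall n))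
    obtain ⟨n₀, hn₀⟩ := hex
    have hstep : ∀ j : ℕ, (c : ℤ → A) (n₀ + j * k) = (c : ℤ → A) n₀ := by
      intro j
      induction j with
      | zero => simp
      | succ j ih =>
          have h1 := hc (n₀ + (j + 1 : ℕ) * k)
          rw [show n₀ + ((j : ℕ) + 1 : ℕ) * k - k = n₀ + j * k by push_cast; ring] at h1
          rw [← h1]
          exact ih
    have hinf : {n : ℤ | (c : ℤ → A) n ≠ 1}.Infinite := by
      refine Set.infinite_of_injective_forall_mem
        (f := fun j : ℕ => n₀ + j * k) ?_ ?_
      · intro i j hij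
        simp only at hij
        have h2 : (i : ℤ) * k = (j : ℤ) * k := by linarith
        have h3 : (i : ℤ) = j := mul_right_cancel₀ hk h2
        exact_mod_cast h3
      · intro j
        simp only [Set.mem_setOf_eq]
        rw [hstep j]
        exact hn₀
    exact hinf c.2
  -- the wreath product witness hypothesis
  have hW : ∀ z, z ∈ φ.range → tau z ≠ 0 → ∃ b, b ∈ φ.range ∧ tau b = 0 ∧
      (b * z * b⁻¹ * z⁻¹) * z ≠ z * (b * z * b⁻¹ * z⁻¹) := by
    intro z hz htz
    obtain ⟨w, rfl⟩ := MonoidHom.mem_range.mp hz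
    rw [htauphi] at htz
    obtain ⟨fw, rw0⟩ := w
    have hrw : SemidirectProduct.rightHom
        (⟨fw, rw0⟩ : SemidirectProduct ↥(finSuppSubgroup A) (Multiplicative ℤ)
          (shiftHom A)) = rw0 := rfl
    rw [hrw] at htz
    refine ⟨φ (SemidirectProduct.inl d0), hphi _,
      (htauphi (SemidirectProduct.inl d0)).trans (by simp), ?_⟩
    intro hcomm
    set W : SemidirectProduct ↥(finSuppSubgroup A) (Multiplicative ℤ) (shiftHom A) :=
      ⟨fw, rw0⟩ with hWdef
    have h2 : (SemidirectProduct.inl d0 * W * (SemidirectProduct.inl d0)⁻¹ * W⁻¹) * W =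
        W * (SemidirectProduct.inl d0 * W * (SemidirectProduct.inl d0)⁻¹ * W⁻¹) := by
      have key : ∀ p q : wreathZ A, φ p * φ q * (φ p)⁻¹ * (φ q)⁻¹ * φ q =
          φ q * (φ p * φ q * (φ p)⁻¹ * (φ q)⁻¹) →
          p * q * p⁻¹ * q⁻¹ * q = q * (p * q * p⁻¹ * q⁻¹) := by
        intro p q h
        apply hinj
        simpa only [map_mul, map_inv] using h
      exact key _ _ hcomm
    set c0 : ↥(finSuppSubgroup A) := d0 * ((shiftHom A rw0) d0)⁻¹ with hc0def
    have hU : SemidirectProduct.inl d0 * W * (SemidirectProduct.inl d0)⁻¹ * W⁻¹ =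
        SemidirectProduct.inl c0 := by
      refine SemidirectProduct.ext ?_ ?_
      · simp only [hWdef, SemidirectProduct.mul_left, SemidirectProduct.left_inl,
          SemidirectProduct.right_inl, SemidirectProduct.inv_left,
          SemidirectProduct.inv_right, SemidirectProduct.mul_right, map_one,
          MulAut.one_apply, one_mul, mul_one, inv_one, map_inv, MulAut.apply_inv_self]
        show d0 * fw * (((shiftHom A) rw0) d0)⁻¹ * fw⁻¹ = c0
        rw [hc0def, mul_right_comm (d0 * fw) (((shiftHom A) rw0) d0)⁻¹ fw⁻¹,
          mul_inv_cancel_right]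
      · simp [hWdef]
    rw [hU] at h2
    have h3 := congrArg SemidirectProduct.left h2
    simp only [hWdef, SemidirectProduct.mul_left, SemidirectProduct.left_inl,
      SemidirectProduct.right_inl, map_one, MulAut.one_apply, mul_one, one_mul] at h3
    have h4 : (shiftHom A rw0) c0 = c0 := by
      have h6 : fw * c0 = fw * (shiftHom A rw0) c0 := by
        rw [mul_comm fw c0]
        exact h3
      exact (mul_left_cancel h6).symm
    have hc1 : c0 = 1 := by
      refine hshift c0 (Multiplicative.toAdd rw0) htz ?_
      intro n
      exact congrArg (fun f : ↥(finSuppSubgroup A) => (f : ℤ → A) n) h4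
    have h8 : d0 * ((shiftHom A rw0) d0)⁻¹ = 1 := by rw [← hc0def]; exact hc1
    have h7 : (shiftHom A rw0) d0 = d0 := (mul_inv_eq_one.mp h8).symm
    have h10 : (d0 : ℤ → A) (Multiplicative.toAdd rw0) =
        (d0 : ℤ → A) (Multiplicative.toAdd rw0 - Multiplicative.toAdd rw0) := by
      conv_lhs => rw [← h7]
      rfl
    rw [sub_self] at h10
    have h12 : (d0 : ℤ → A) 0 = a := by rw [hd0def]; simp
    have h13 : (d0 : ℤ → A) (Multiplicative.toAdd rw0) = (1 : A) := by
      rw [hd0def]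
      exact if_neg htz
    rw [h12, h13] at h10
    exact ha h10.symm
  -- bounds for t0
  obtain ⟨hb1, hb2⟩ := hbag t0 ht0
  obtain ⟨Kt, hKt⟩ := hb1
  obtain ⟨Ct, hCt⟩ : ∃ Ct : ℕ, ∀ v : List X, (tau (secAt t0 v)).natAbs ≤ Ct := by
    have hfin2 : ((fun s => (tau s).natAbs) ''
        (Set.range fun v : List X => secAt t0 v)).Finite := hb2.image _
    obtain ⟨Ct, hCt⟩ := hfin2.bddAbove
    exact ⟨Ct, fun v => hCt ⟨secAt t0 v, ⟨v, rfl⟩, rfl⟩⟩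
  -- apply the kill lemma
  have hb0 : φ (SemidirectProduct.inl d0) = 1 :=
    AuxWreath.core_kill hle hssG hsec htrans tau htau hker hW t0 ht0 htaut Kt Ct hKt hCt
      (φ (SemidirectProduct.inl d0)) (hphi _) ((htauphi (SemidirectProduct.inl d0)).trans (by simp))
  apply hd0ne
  have h11 : φ (SemidirectProduct.inl d0) = φ 1 := by rw [hb0, map_one]
  have h12 := hinj h11
  exact SemidirectProduct.inl_injective (by rw [map_one]; exact h12)
end
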